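/- arXiv:math/0504063 — 4 statements merged into one kernel-verified Lean document; each statement's English description precedes it below -/
import Mathlib

section
/- Let Γ₁ and Γ₂ be discrete groups and let φ be the group trace on the group algebra ℂ(Γ₁ * Γ₂) (i.e. φ(g) = 0 for g ≠ 1 and φ(1) = 1, extended linearly). If a = a₁ ⋯ aₙ with aⱼ in the image of ℂΓ_{i(j)}, where i(1) ≠ i(2), i(2) ≠ i(3), …, and φ(aⱼ) = 0 for all j, then φ(a) = 0. -/
/-- Let `φ` be the group trace on the group algebra `ℂ(Γ₁ * Γ₂)` of a free product
of two groups. If `a = a₁ ⋯ aₙ` where each `aⱼ` comes from the group algebra of one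
of the factors, consecutive factors are different, and `φ(aⱼ) = 0` for all `j`,
then `φ(a) = 0`. -/
theorem groupTrace_alternating_centered_prod_eq_zero
    (Γ : Fin 2 → Type) [∀ i, Group (Γ i)]
    (φ : MonoidAlgebra ℂ (Monoid.CoprodI Γ) → ℂ)
    (hφ : ∀ a : MonoidAlgebra ℂ (Monoid.CoprodI Γ), φ a = a.coeff 1)
    (n : ℕ) (hn : 0 < n)
    (i : ℕ → Fin 2) (hi : ∀ j, j + 1 < n → i j ≠ i (j + 1))
    (a : ℕ → MonoidAlgebra ℂ (Monoid.CoprodI Γ))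
    (ha : ∀ j < n, ∃ b : MonoidAlgebra ℂ (Γ (i j)),
      a j = MonoidAlgebra.mapDomainRingHom ℂ (Monoid.CoprodI.of (M := Γ) (i := i j)) b)
    (hcent : ∀ j < n, φ (a j) = 0) :
    φ (((List.range n).map a).prod) = 0 := by
  classical
  open Monoid Monoid.CoprodI MonoidAlgebra in
  -- extract the factor-algebra elements
  choose b hb using ha
  -- each `b j` has zero coefficient at 1
  have hb1 : ∀ j (hj : j < n), (b j hj).coeff 1 = 0 := by
    intro j hj
    have h0 := hcent j hj
    rw [hφ, hb j hj] at h0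
    have : (Finsupp.mapDomain (Monoid.CoprodI.of (M := Γ) (i := i j)) (b j hj).coeff) 1
        = (b j hj).coeff 1 := by
      have := Finsupp.mapDomain_apply (Monoid.CoprodI.of_injective (M := Γ) (i j))
        (b j hj).coeff 1
      simpa using this
    have h1 : (MonoidAlgebra.mapDomainRingHom ℂ (Monoid.CoprodI.of (M := Γ) (i := i j))
        (b j hj)).coeff 1
        = (Finsupp.mapDomain (Monoid.CoprodI.of (M := Γ) (i := i j)) (b j hj).coeff) 1 := rfl
    rw [h1, this] at h0; exact h0
  -- the set of group elements whose reduced word starts with a letter from factor j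
  set S : Fin 2 → Set (Monoid.CoprodI Γ) :=
    fun j => {m | (Monoid.CoprodI.Word.equiv m).fstIdx = some j} with hS
  -- corresponding spans in the group algebra
  set Sp : Fin 2 → Submodule ℂ (MonoidAlgebra ℂ (Monoid.CoprodI Γ)) :=
    fun j => Submodule.span ℂ
      {x | ∃ m ∈ S j, ∃ c : ℂ, x = MonoidAlgebra.single m c} with hSp
  have hequiv : ∀ m : Monoid.CoprodI Γ,
      Monoid.CoprodI.Word.equiv m = m • Monoid.CoprodI.Word.empty := fun _ => rfl
  -- key step: multiplying a reduced word not starting in factor j by a nontrivial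
  -- letter of factor j gives a word starting in factor j
  have hstep : ∀ (j : Fin 2) (g : Γ j), g ≠ 1 → ∀ m : Monoid.CoprodI Γ,
      (Monoid.CoprodI.Word.equiv m).fstIdx ≠ some j →
      (Monoid.CoprodI.Word.equiv (Monoid.CoprodI.of g * m)).fstIdx = some j := by
    intro j g hg m hm
    have : Monoid.CoprodI.Word.equiv (Monoid.CoprodI.of g * m)
        = Monoid.CoprodI.of g • Monoid.CoprodI.Word.equiv m := by
      rw [hequiv, hequiv, mul_smul]
    rw [this, Monoid.CoprodI.Word.of_smul_def,
      Monoid.CoprodI.Word.equivPair_eq_of_fstIdx_ne hm]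
    simp only [Monoid.CoprodI.Word.rcons, mul_one]
    rw [dif_neg hg]
    exact Monoid.CoprodI.Word.fstIdx_cons g _ hm hg
  have hempty : (Monoid.CoprodI.Word.equiv (1 : Monoid.CoprodI Γ))
      = Monoid.CoprodI.Word.empty := by
    rw [hequiv, one_smul]
  -- a single nontrivial letter
  have hone : ∀ (j : Fin 2) (g : Γ j), g ≠ 1 →
      (Monoid.CoprodI.Word.equiv (Monoid.CoprodI.of g)).fstIdx = some j := by
    intro j g hg
    have := hstep j g hg 1 (by rw [hempty]; simp [Monoid.CoprodI.Word.fstIdx,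
      Monoid.CoprodI.Word.empty])
    simpa using this
  -- expansion of `a k` as a sum of singles
  have hrep : ∀ k (hk : k < n), a k = ∑ g ∈ (b k hk).coeff.support,
      MonoidAlgebra.single (Monoid.CoprodI.of g) ((b k hk).coeff g) := by
    intro k hk
    rw [hb k hk]
    have h0 : (MonoidAlgebra.mapDomainRingHom ℂ
          (Monoid.CoprodI.of (M := Γ) (i := i k))) (b k hk)
        = MonoidAlgebra.ofCoeff
            (Finsupp.mapDomain (Monoid.CoprodI.of (M := Γ) (i := i k)) (b k hk).coeff) := rfl
    rw [h0, Finsupp.mapDomain, Finsupp.sum, MonoidAlgebra.ofCoeff_sum]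
    rfl
  -- each `a k` lies in `Sp (i k)`
  have hak : ∀ k (hk : k < n), a k ∈ Sp (i k) := by
    intro k hk
    rw [hrep k hk]
    apply Submodule.sum_mem
    intro g hgsupp
    have hg1 : g ≠ 1 := by
      rintro rfl; exact (Finsupp.mem_support_iff.mp hgsupp) (hb1 k hk)
    exact Submodule.subset_span ⟨Monoid.CoprodI.of g, hone (i k) g hg1, _, rfl⟩
  -- multiplying `a k` into `Sp (i (k+1))` lands in `Sp (i k)`
  have hmul : ∀ k, k + 1 < n → ∀ x ∈ Sp (i (k + 1)), a k * x ∈ Sp (i k) := by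
    intro k hk x hx
    induction hx using Submodule.span_induction with
    | mem x hxmem =>
      obtain ⟨m, hmS, c, rfl⟩ := hxmem
      rw [hrep k (Nat.lt_of_succ_lt hk), Finset.sum_mul]
      apply Submodule.sum_mem
      intro g hgsupp
      have hg1 : g ≠ 1 := by
        rintro rfl
        exact Finsupp.mem_support_iff.mp hgsupp (hb1 k (Nat.lt_of_succ_lt hk))
      rw [MonoidAlgebra.single_mul_single]
      refine Submodule.subset_span ⟨Monoid.CoprodI.of g * m, ?_, _, rfl⟩
      refine hstep (i k) g hg1 m ?_
      rw [hmS]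
      simp only [ne_eq, Option.some.injEq]
      exact fun h => hi k hk h.symm
    | zero => rw [mul_zero]; exact Submodule.zero_mem _
    | add x y _ _ hx hy => rw [mul_add]; exact Submodule.add_mem _ hx hy
    | smul c x _ hx => rw [mul_smul_comm]; exact Submodule.smul_mem _ _ hx
  -- tail products lie in the spans
  have key : ∀ (m k : ℕ), k + (m + 1) = n →
      ((List.range' k (m + 1)).map a).prod ∈ Sp (i k) := by
    intro m
    induction m with
    | zero =>
      intro k hk
      simp only [show (0:ℕ) + 1 = 1 from rfl, List.range'_one, List.map_cons,
        List.map_nil, List.prod_cons, List.prod_nil, mul_one]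
      exact hak k (by omega)
    | succ m ih =>
      intro k hk
      rw [List.range'_succ (s := k) (n := m + 1) (step := 1), List.map_cons, List.prod_cons]
      exact hmul k (by omega) _ (ih (k + 1) (by omega))
  -- finish: evaluation at 1 kills everything in `Sp (i 0)`
  have hmem : ((List.range n).map a).prod ∈ Sp (i 0) := by
    rw [List.range_eq_range' (n := n)]
    obtain ⟨m, rfl⟩ : ∃ m, n = m + 1 := ⟨n - 1, by omega⟩
    exact key m 0 (by omega)
  rw [hφ]
  have hker : ∀ x ∈ Sp (i 0), (x : MonoidAlgebra ℂ (Monoid.CoprodI Γ)).coeff 1 = 0 := by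
    intro x hx
    induction hx using Submodule.span_induction with
    | mem x hxmem =>
      obtain ⟨m, hmS, c, rfl⟩ := hxmem
      have hm1 : m ≠ 1 := by
        rintro rfl
        rw [hS] at hmS
        simp only [Set.mem_setOf_eq, hempty] at hmS
        simp [Monoid.CoprodI.Word.fstIdx, Monoid.CoprodI.Word.empty] at hmS
      rw [MonoidAlgebra.single_apply, if_neg hm1]
    | zero => rfl
    | add x y _ _ hx hy => rw [MonoidAlgebra.coeff_add, Finsupp.add_apply, hx, hy, add_zero]
    | smul c x _ hx => rw [MonoidAlgebra.coeff_smul, Finsupp.smul_apply, hx, smul_zero]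
  exact hker _ hmem
end

section
/- Given two non-commutative probability spaces (A₁, φ₁) and (A₂, φ₂) (unital ℂ-algebras with unital linear functionals), there exists a unique linear functional φ on the free product algebra A₁ * A₂ with φ(1) = 1 such that φ(a₁⋯aₙ) = 0 whenever aⱼ ∈ A_{i(j)} with i(1) ≠ i(2), i(2) ≠ i(3), …, and φ_{i(j)}(aⱼ) = 0 for all j. -/
namespace FreePS

open Finsupp

variable {Λ : Type} (σ : Λ → Bool)

abbrev Alt (l : List Λ) : Prop := l.Chain' (fun x y => σ x ≠ σ y)

abbrev Words := {l : List Λ // Alt σ l}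

abbrev V := Words σ →₀ ℂ

noncomputable def δ (w : Words σ) : V σ := Finsupp.single w 1

def HeadOK (s : Bool) (t : Words σ) : Prop := ∀ x ∈ t.1.head?, σ x ≠ s

noncomputable def Shead (s' : Bool) : Submodule ℂ (V σ) :=
  Submodule.span ℂ {v | ∃ (w : Words σ) (x : Λ) (t : List Λ), w.1 = x :: t ∧ σ x = s' ∧ v = δ σ w}

section OneSide

variable {A : Type} [Ring A] [Algebra ℂ A] (φ : A →ₗ[ℂ] ℂ) (hφ : φ 1 = 1)

noncomputable def bas := Module.Basis.ofVectorSpace ℂ (LinearMap.ker φ)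

noncomputable def centerL : A →ₗ[ℂ] LinearMap.ker φ :=
  LinearMap.codRestrict (LinearMap.ker φ) (LinearMap.id - φ.smulRight 1) (fun a => by
    simp [LinearMap.mem_ker, hφ])

lemma centerL_apply (a : A) : (centerL φ hφ a : A) = a - φ a • 1 := rfl

lemma centerL_coe (k : LinearMap.ker φ) : centerL φ hφ (k : A) = k := by
  ext
  simp [centerL_apply, LinearMap.mem_ker.mp k.2]

lemma centerL_one : centerL φ hφ 1 = 0 := by
  ext
  simp [centerL_apply, hφ]

noncomputable def rep : A →ₗ[ℂ] (Module.Basis.ofVectorSpaceIndex ℂ (LinearMap.ker φ) →₀ ℂ) :=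
  ((bas φ).repr : LinearMap.ker φ ≃ₗ[ℂ] _).toLinearMap ∘ₗ centerL φ hφ

lemma rep_one : rep φ hφ 1 = 0 := by simp [rep, centerL_one]

lemma rep_basis (c) : rep φ hφ ((bas φ c : LinearMap.ker φ) : A) = Finsupp.single c 1 := by
  simp [rep, centerL_coe, Module.Basis.repr_self]

lemma phi_coe (k : LinearMap.ker φ) : φ (k : A) = 0 := LinearMap.mem_ker.mp k.2

variable (s : Bool) (e : Module.Basis.ofVectorSpaceIndex ℂ (LinearMap.ker φ) ≃ {x : Λ // σ x = s})

open Classical in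
noncomputable def consV (c : Module.Basis.ofVectorSpaceIndex ℂ (LinearMap.ker φ)) (t : Words σ) : V σ :=
  if h : Alt σ ((e c).1 :: t.1) then δ σ ⟨_, h⟩ else 0

noncomputable def L (a : A) (t : Words σ) : V σ :=
  φ a • δ σ t + Finsupp.linearCombination ℂ (fun c => consV σ φ s e c t) (rep φ hφ a)

lemma L_add (a b : A) (t : Words σ) :
    L σ φ hφ s e (a + b) t = L σ φ hφ s e a t + L σ φ hφ s e b t := by
  simp only [L, map_add, add_smul]
  abel

lemma L_smul (r : ℂ) (a : A) (t : Words σ) :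
    L σ φ hφ s e (r • a) t = r • L σ φ hφ s e a t := by
  simp only [L, map_smul, smul_add, smul_smul]
  rfl

lemma L_sub (a b : A) (t : Words σ) :
    L σ φ hφ s e (a - b) t = L σ φ hφ s e a t - L σ φ hφ s e b t := by
  simp only [L, map_sub, sub_smul]
  abel

lemma consV_eq (c) (t : Words σ) (ht : HeadOK σ s t) :
    consV σ φ s e c t =
      δ σ ⟨(e c).1 :: t.1, List.isChain_cons.mpr ⟨fun y hy => by
        rw [(e c).2]
        exact (ht y hy).symm, t.2⟩⟩ := by
  rw [consV, dif_pos]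
  exact List.isChain_cons.mpr ⟨fun y hy => by rw [(e c).2]; exact (ht y hy).symm, t.2⟩

noncomputable def stepAux (a : A) : (l : List Λ) → Alt σ l → V σ
  | [], h => L σ φ hφ s e a ⟨[], h⟩
  | x :: t, h =>
    if hx : σ x = s then
      L σ φ hφ s e (a * ((bas φ (e.symm ⟨x, hx⟩) : LinearMap.ker φ) : A)) ⟨t, h.tail⟩
    else L σ φ hφ s e a ⟨x :: t, h⟩

noncomputable def actF (a : A) : V σ →ₗ[ℂ] V σ :=
  Finsupp.lsum ℂ (fun w => LinearMap.toSpanSingleton ℂ (V σ) (stepAux σ φ hφ s e a w.1 w.2))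

lemma actF_single (a : A) (w : Words σ) :
    actF σ φ hφ s e a (δ σ w) = stepAux σ φ hφ s e a w.1 w.2 := by
  simp [actF, δ, Finsupp.lsum_single, LinearMap.toSpanSingleton_apply]

lemma stepAux_one (hφ : φ 1 = 1) (l : List Λ) (h : Alt σ l) :
    stepAux σ φ hφ s e 1 l h = δ σ ⟨l, h⟩ := by
  cases l with
  | nil => simp [stepAux, L, hφ, rep_one, δ]
  | cons x t =>
    by_cases hx : σ x = s
    · rw [stepAux, dif_pos hx, one_mul, L, phi_coe, zero_smul, zero_add, rep_basis,
        Finsupp.linearCombination_single, one_smul, consV, dif_pos]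
      · congr 1
        apply Subtype.ext
        show ((e (e.symm ⟨x, hx⟩)).1 : Λ) :: t = x :: t
        rw [Equiv.apply_symm_apply]
      · rw [Equiv.apply_symm_apply]
        exact h
    · rw [stepAux, dif_neg hx]
      simp [L, hφ, rep_one, δ]

lemma actF_δ_ok (hφ : φ 1 = 1) (a : A) (t : Words σ) (ht : HeadOK σ s t) :
    actF σ φ hφ s e a (δ σ t) = L σ φ hφ s e a t := by
  rw [actF_single]
  obtain ⟨l, hl⟩ := t
  cases l with
  | nil => rfl
  | cons x t' =>
    rw [stepAux, dif_neg]
    exact ht x rfl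

lemma actF_consV (hφ : φ 1 = 1) (a : A) (c) (t : Words σ) (ht : HeadOK σ s t) :
    actF σ φ hφ s e a (consV σ φ s e c t) =
      L σ φ hφ s e (a * ((bas φ c : LinearMap.ker φ) : A)) t := by
  rw [consV_eq σ φ s e c t ht, actF_single, stepAux, dif_pos (e c).2]
  have h1 : e.symm ⟨(e c).1, (e c).2⟩ = c := by
    rw [Subtype.coe_eta, Equiv.symm_apply_apply]
  rw [h1]

noncomputable def Lmul (hφ : φ 1 = 1) (a : A) (t : Words σ) : LinearMap.ker φ →ₗ[ℂ] V σ where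
  toFun k := L σ φ hφ s e (a * (k : A)) t
  map_add' k k' := by rw [Submodule.coe_add, mul_add, L_add]
  map_smul' r k := by
    rw [SetLike.val_smul, mul_smul_comm, L_smul]
    rfl

lemma act_L (a x : A) (t : Words σ) (ht : HeadOK σ s t) :
    actF σ φ hφ s e a (L σ φ hφ s e x t) = L σ φ hφ s e (a * x) t := by
  rw [L, map_add, map_smul, actF_δ_ok σ φ s e hφ a t ht,
    Finsupp.apply_linearCombination]
  have h1 : (⇑(actF σ φ hφ s e a) ∘ fun c => consV σ φ s e c t)
      = (Lmul σ φ s e hφ a t) ∘ (bas φ) := by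
    funext c
    exact actF_consV σ φ s e hφ a c t ht
  rw [h1, ← Finsupp.apply_linearCombination, rep,
    LinearMap.comp_apply]
  rw [show ((bas φ).repr.toLinearMap (centerL φ hφ x) : _ →₀ ℂ)
      = (bas φ).repr (centerL φ hφ x) from rfl]
  rw [Module.Basis.linearCombination_repr]
  rw [show (Lmul σ φ s e hφ a t) (centerL φ hφ x) = L σ φ hφ s e (a * (x - φ x • 1)) t from rfl]
  rw [mul_sub, mul_smul_comm, mul_one, L_sub, L_smul]
  abel

lemma actF_mul_single (a b : A) (w : Words σ) :
    actF σ φ hφ s e (a * b) (δ σ w) =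
      actF σ φ hφ s e a (actF σ φ hφ s e b (δ σ w)) := by
  obtain ⟨l, hl⟩ := w
  cases l with
  | nil =>
    rw [actF_single, actF_single]
    show stepAux σ φ hφ s e (a * b) [] hl = _
    rw [stepAux, stepAux]
    rw [act_L σ φ hφ s e a b ⟨[], hl⟩ (by intro x hx; simp at hx)]
  | cons x t =>
    rw [actF_single, actF_single]
    show stepAux σ φ hφ s e (a * b) (x :: t) hl = _
    by_cases hx : σ x = s
    · rw [stepAux, dif_pos hx, stepAux, dif_pos hx]
      have ht : HeadOK σ s ⟨t, hl.tail⟩ := by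
        intro y hy
        rw [← hx]
        exact ((List.isChain_cons.mp hl).1 y hy).symm
      rw [act_L σ φ hφ s e a _ _ ht, mul_assoc]
    · rw [stepAux, dif_neg hx, stepAux, dif_neg hx]
      have ht : HeadOK σ s ⟨x :: t, hl⟩ := by
        intro y hy
        simp only [List.head?_cons, Option.mem_def, Option.some.injEq] at hy
        rw [← hy]
        exact hx
      rw [act_L σ φ hφ s e a b _ ht]

lemma stepAux_add (a b : A) (l : List Λ) (h : Alt σ l) :
    stepAux σ φ hφ s e (a + b) l h = stepAux σ φ hφ s e a l h + stepAux σ φ hφ s e b l h := by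
  cases l with
  | nil => exact L_add σ φ hφ s e a b _
  | cons x t =>
    by_cases hx : σ x = s
    · rw [stepAux, dif_pos hx, stepAux, dif_pos hx, stepAux, dif_pos hx, add_mul, L_add]
    · rw [stepAux, dif_neg hx, stepAux, dif_neg hx, stepAux, dif_neg hx, L_add]

lemma stepAux_smul (r : ℂ) (a : A) (l : List Λ) (h : Alt σ l) :
    stepAux σ φ hφ s e (r • a) l h = r • stepAux σ φ hφ s e a l h := by
  cases l with
  | nil => exact L_smul σ φ hφ s e r a _
  | cons x t =>
    by_cases hx : σ x = s
    · rw [stepAux, dif_pos hx, stepAux, dif_pos hx, smul_mul_assoc, L_smul]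
    · rw [stepAux, dif_neg hx, stepAux, dif_neg hx, L_smul]

noncomputable def actLin : A →ₗ[ℂ] Module.End ℂ (V σ) where
  toFun a := actF σ φ hφ s e a
  map_add' a b := by
    apply Finsupp.lhom_ext
    intro w r
    have h1 : (Finsupp.single w r : V σ) = r • δ σ w := by
      simp [δ, Finsupp.smul_single]
    simp only [LinearMap.add_apply, h1, map_smul]
    rw [actF_single, actF_single, actF_single, stepAux_add, smul_add]
  map_smul' r a := by
    apply Finsupp.lhom_ext
    intro w c
    have h1 : (Finsupp.single w c : V σ) = c • δ σ w := by
      simp [δ, Finsupp.smul_single]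
    simp only [RingHom.id_apply, LinearMap.smul_apply, h1, map_smul]
    rw [actF_single, actF_single, stepAux_smul, smul_comm]

noncomputable def pialg : A →ₐ[ℂ] Module.End ℂ (V σ) :=
  AlgHom.ofLinearMap (actLin σ φ hφ s e)
    (by
      apply Finsupp.lhom_ext
      intro w r
      have h1 : (Finsupp.single w r : V σ) = r • δ σ w := by
        simp [δ, Finsupp.smul_single]
      show actF σ φ hφ s e 1 (Finsupp.single w r) = LinearMap.id (Finsupp.single w r)
      simp only [h1, map_smul, LinearMap.id_apply]
      rw [actF_single, stepAux_one])
    (by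
      intro a b
      apply Finsupp.lhom_ext
      intro w r
      have h1 : (Finsupp.single w r : V σ) = r • δ σ w := by
        simp [δ, Finsupp.smul_single]
      show actF σ φ hφ s e (a * b) _ = (actF σ φ hφ s e a ∘ₗ actF σ φ hφ s e b) _
      simp only [h1, map_smul, LinearMap.comp_apply]
      rw [actF_mul_single])

lemma pialg_apply (a : A) (v : V σ) : pialg σ φ hφ s e a v = actF σ φ hφ s e a v := rfl

lemma L_mem_Shead (x : A) (hx : φ x = 0) (t : Words σ) (ht : HeadOK σ s t) :
    L σ φ hφ s e x t ∈ Shead σ s := by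
  rw [L, hx, zero_smul, zero_add, Finsupp.linearCombination_apply, Finsupp.sum]
  apply Submodule.sum_mem
  intro c _
  apply Submodule.smul_mem
  rw [consV_eq σ φ s e c t ht]
  apply Submodule.subset_span
  exact ⟨_, (e c).1, t.1, rfl, (e c).2, rfl⟩

lemma act_nil_mem (x : A) (hx : φ x = 0) :
    actF σ φ hφ s e x (δ σ ⟨[], List.isChain_nil⟩) ∈ Shead σ s := by
  rw [actF_δ_ok σ φ s e hφ x _ (by intro y hy; simp at hy)]
  exact L_mem_Shead σ φ hφ s e x hx _ (by intro y hy; simp at hy)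

lemma act_mem (x : A) (hx : φ x = 0) (s' : Bool) (hs : s' ≠ s) (v : V σ)
    (hv : v ∈ Shead σ s') : actF σ φ hφ s e x v ∈ Shead σ s := by
  induction hv using Submodule.span_induction with
  | mem u hu =>
    obtain ⟨w, y, t, hw, hy, rfl⟩ := hu
    have ht : HeadOK σ s w := by
      intro z hz
      rw [hw] at hz
      simp only [List.head?_cons, Option.mem_def, Option.some.injEq] at hz
      rw [← hz, hy]
      exact hs
    rw [actF_δ_ok σ φ s e hφ x w ht]
    exact L_mem_Shead σ φ hφ s e x hx w ht
  | zero => rw [map_zero]; exact Submodule.zero_mem _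
  | add u u' hu hu' ihu ihu' => rw [map_add]; exact Submodule.add_mem _ ihu ihu'
  | smul r u hu ihu => rw [map_smul]; exact Submodule.smul_mem _ r ihu

end OneSide

lemma Shead_nil_coeff (s' : Bool) (v : V σ) (hv : v ∈ Shead σ s') :
    v ⟨[], List.isChain_nil⟩ = 0 := by
  classical
  induction hv using Submodule.span_induction with
  | mem u hu =>
    obtain ⟨w, y, t, hw, hy, rfl⟩ := hu
    rw [δ, Finsupp.single_apply, if_neg]
    intro h
    rw [h] at hw
    simp at hw
  | zero => rfl
  | add u u' hu hu' ihu ihu' => rw [Finsupp.add_apply, ihu, ihu', add_zero]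
  | smul r u hu ihu => rw [Finsupp.smul_apply, ihu, smul_zero]


section Two

variable {A₁ A₂ : Type} [Ring A₁] [Algebra ℂ A₁] [Ring A₂] [Algebra ℂ A₂]
variable (φ₁ : A₁ →ₗ[ℂ] ℂ) (φ₂ : A₂ →ₗ[ℂ] ℂ)

abbrev Lam := (Module.Basis.ofVectorSpaceIndex ℂ (LinearMap.ker φ₁)) ⊕
  (Module.Basis.ofVectorSpaceIndex ℂ (LinearMap.ker φ₂))

def sgn : Lam φ₁ φ₂ → Bool := Sum.isRight

def eL : (Module.Basis.ofVectorSpaceIndex ℂ (LinearMap.ker φ₁)) ≃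
    {x : Lam φ₁ φ₂ // sgn φ₁ φ₂ x = false} where
  toFun c := ⟨Sum.inl c, rfl⟩
  invFun x := match x with
    | ⟨Sum.inl c, _⟩ => c
    | ⟨Sum.inr _, h⟩ => nomatch h
  left_inv c := rfl
  right_inv x := match x with
    | ⟨Sum.inl c, _⟩ => rfl
    | ⟨Sum.inr _, h⟩ => nomatch h

def eR : (Module.Basis.ofVectorSpaceIndex ℂ (LinearMap.ker φ₂)) ≃
    {x : Lam φ₁ φ₂ // sgn φ₁ φ₂ x = true} where
  toFun c := ⟨Sum.inr c, rfl⟩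
  invFun x := match x with
    | ⟨Sum.inr c, _⟩ => c
    | ⟨Sum.inl _, h⟩ => nomatch h
  left_inv c := rfl
  right_inv x := match x with
    | ⟨Sum.inr c, _⟩ => rfl
    | ⟨Sum.inl _, h⟩ => nomatch h

noncomputable def nilW : Words (sgn φ₁ φ₂) := ⟨[], List.isChain_nil⟩

noncomputable def Om : V (sgn φ₁ φ₂) := δ _ (nilW φ₁ φ₂)

noncomputable def vac : Module.End ℂ (V (sgn φ₁ φ₂)) →ₗ[ℂ] ℂ :=
  Finsupp.lapply (nilW φ₁ φ₂) ∘ₗ LinearMap.applyₗ (Om φ₁ φ₂)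

lemma vac_one : vac φ₁ φ₂ 1 = 1 := by
  simp [vac, Om, nilW, δ, Module.End.one_apply]

lemma vac_apply (T : Module.End ℂ (V (sgn φ₁ φ₂))) :
    vac φ₁ φ₂ T = (T (Om φ₁ φ₂)) (nilW φ₁ φ₂) := rfl

def sideOf : Fin 2 → Bool := fun k => k = 1

end Two

@[simp] lemma sideOf_zero : sideOf 0 = false := rfl
@[simp] lemma sideOf_one : sideOf 1 = true := rfl

lemma key_mem {A₁ A₂ C : Type} [Ring A₁] [Algebra ℂ A₁] [Ring A₂] [Algebra ℂ A₂]
    [Ring C] [Algebra ℂ C] (ι₁ : A₁ →ₐ[ℂ] C) (ι₂ : A₂ →ₐ[ℂ] C)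
    (φ₁ : A₁ →ₗ[ℂ] ℂ) (hφ₁ : φ₁ 1 = 1) (φ₂ : A₂ →ₗ[ℂ] ℂ) (hφ₂ : φ₂ 1 = 1)
    (h : C →ₐ[ℂ] Module.End ℂ (V (sgn φ₁ φ₂)))
    (hc1 : h.comp ι₁ = pialg _ φ₁ hφ₁ false (eL φ₁ φ₂))
    (hc2 : h.comp ι₂ = pialg _ φ₂ hφ₂ true (eR φ₁ φ₂)) :
    ∀ n, 0 < n → ∀ (i : ℕ → Fin 2) (a : ℕ → C),
      (∀ j, j + 1 < n → i j ≠ i (j + 1)) →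
      (∀ j < n, (i j = 0 ∧ ∃ b : A₁, a j = ι₁ b ∧ φ₁ b = 0) ∨
        (i j = 1 ∧ ∃ b : A₂, a j = ι₂ b ∧ φ₂ b = 0)) →
      (h (((List.range n).map a).prod)) (Om φ₁ φ₂) ∈ Shead (sgn φ₁ φ₂) (sideOf (i 0)) := by
  intro n
  induction n with
  | zero => omega
  | succ k ih =>
    intro _ i a halt hcent
    have hι₁ : ∀ b : A₁, h (ι₁ b) = pialg _ φ₁ hφ₁ false (eL φ₁ φ₂) b := fun b => by
      rw [← AlgHom.comp_apply, hc1]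
    have hι₂ : ∀ b : A₂, h (ι₂ b) = pialg _ φ₂ hφ₂ true (eR φ₁ φ₂) b := fun b => by
      rw [← AlgHom.comp_apply, hc2]
    rcases Nat.eq_zero_or_pos k with hk | hk
    · subst hk
      have h1 : ((List.range 1).map a).prod = a 0 := by
        rw [show List.range 1 = [0] from rfl]
        simp
      rw [h1]
      rcases hcent 0 (by omega) with ⟨hi0, b, hab, hb⟩ | ⟨hi0, b, hab, hb⟩
      · rw [hi0, sideOf_zero, hab, hι₁ b, pialg_apply]
        exact act_nil_mem _ φ₁ hφ₁ false (eL φ₁ φ₂) b hb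
      · rw [hi0, sideOf_one, hab, hι₂ b, pialg_apply]
        exact act_nil_mem _ φ₂ hφ₂ true (eR φ₁ φ₂) b hb
    · have hsplit : ((List.range (k+1)).map a).prod
          = a 0 * ((List.range k).map (fun j => a (j+1))).prod := by
        rw [List.range_succ_eq_map, List.map_cons, List.prod_cons, List.map_map]
        rfl
      rw [hsplit, map_mul, Module.End.mul_apply]
      have htail := ih hk (fun j => i (j+1)) (fun j => a (j+1))
        (fun j hj => halt (j+1) (by omega)) (fun j hj => hcent (j+1) (by omega))
      rcases hcent 0 (by omega) with ⟨hi0, b, hab, hb⟩ | ⟨hi0, b, hab, hb⟩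
      · have hi1 : i 1 = 1 := by
          have h01 := halt 0 (by omega)
          rw [hi0] at h01
          revert h01
          generalize i 1 = x
          revert x
          decide
        rw [hi0, sideOf_zero, hab, hι₁ b, pialg_apply]
        refine act_mem _ φ₁ hφ₁ false (eL φ₁ φ₂) b hb (sideOf (i 1)) ?_ _ htail
        rw [hi1, sideOf_one]
        simp
      · have hi1 : i 1 = 0 := by
          have h01 := halt 0 (by omega)
          rw [hi0] at h01
          revert h01
          generalize i 1 = x
          revert x
          decide
        rw [hi0, sideOf_one, hab, hι₂ b, pialg_apply]
        refine act_mem _ φ₂ hφ₂ true (eR φ₁ φ₂) b hb (sideOf (i 1)) ?_ _ htail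
        rw [hi1, sideOf_zero]
        simp

section Uniq

variable {A₁ A₂ C : Type} [Ring A₁] [Algebra ℂ A₁] [Ring A₂] [Algebra ℂ A₂]
    [Ring C] [Algebra ℂ C] (ι₁ : A₁ →ₐ[ℂ] C) (ι₂ : A₂ →ₐ[ℂ] C)
    (φ₁ : A₁ →ₗ[ℂ] ℂ) (φ₂ : A₂ →ₗ[ℂ] ℂ)

def Cent (i : ℕ → Fin 2) (a : ℕ → C) (j : ℕ) : Prop :=
  (i j = 0 ∧ ∃ b : A₁, a j = ι₁ b ∧ φ₁ b = 0) ∨ (i j = 1 ∧ ∃ b : A₂, a j = ι₂ b ∧ φ₂ b = 0)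

def WSet : Set C := {x | ∃ n, 0 < n ∧ ∃ i a, (∀ j, j + 1 < n → i j ≠ i (j + 1)) ∧
  (∀ j < n, Cent ι₁ ι₂ φ₁ φ₂ i a j) ∧ x = ((List.range n).map a).prod}

def DSpan : Submodule ℂ C := Submodule.span ℂ ({1} ∪ WSet ι₁ ι₂ φ₁ φ₂)

lemma prod_split (n m : ℕ) (a : ℕ → C) :
    ((List.range (n + m)).map a).prod
      = ((List.range n).map a).prod * ((List.range m).map (fun k => a (n + k))).prod := by
  rw [List.range_add, List.map_append, List.prod_append, List.map_map]
  rfl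

lemma prod_congr (n : ℕ) (a a' : ℕ → C) (h : ∀ j < n, a j = a' j) :
    ((List.range n).map a).prod = ((List.range n).map a').prod := by
  congr 1
  apply List.map_congr_left
  intro j hj
  exact h j (List.mem_range.mp hj)

lemma prod_succ (n : ℕ) (a : ℕ → C) :
    ((List.range (n + 1)).map a).prod = ((List.range n).map a).prod * a n := by
  rw [List.range_succ, List.map_append, List.prod_append]
  simp

lemma prod_shift (n : ℕ) (a : ℕ → C) :
    ((List.range (n + 1)).map a).prod = a 0 * ((List.range n).map (fun k => a (k + 1))).prod := by
  rw [List.range_succ_eq_map, List.map_cons, List.prod_cons, List.map_map]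
  rfl

lemma concat_mem (n m : ℕ) (hn : 0 < n) (hm : 0 < m) (i : ℕ → Fin 2) (a : ℕ → C)
    (i' : ℕ → Fin 2) (a' : ℕ → C)
    (halt : ∀ j, j + 1 < n → i j ≠ i (j + 1)) (hcent : ∀ j < n, Cent ι₁ ι₂ φ₁ φ₂ i a j)
    (halt' : ∀ j, j + 1 < m → i' j ≠ i' (j + 1)) (hcent' : ∀ j < m, Cent ι₁ ι₂ φ₁ φ₂ i' a' j)
    (hdiff : i (n - 1) ≠ i' 0) :
    ((List.range n).map a).prod * ((List.range m).map a').prod ∈ WSet ι₁ ι₂ φ₁ φ₂ := by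
  refine ⟨n + m, by omega, (fun j => if j < n then i j else i' (j - n)),
    (fun j => if j < n then a j else a' (j - n)), ?_, ?_, ?_⟩
  · intro j hj
    dsimp only
    rcases Nat.lt_trichotomy (j + 1) n with hc | hc | hc
    · have h1 : j < n := by omega
      simp only [if_pos h1, if_pos hc]
      exact halt j hc
    · have h1 : j < n := by omega
      have h2 : ¬ (j + 1 < n) := by omega
      simp only [if_pos h1, if_neg h2]
      have e1 : j = n - 1 := by omega
      have e2 : j + 1 - n = 0 := by omega
      rw [e2, e1]
      exact hdiff
    · have h1 : ¬ (j < n) := by omega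
      have h2 : ¬ (j + 1 < n) := by omega
      simp only [if_neg h1, if_neg h2]
      have e2 : j + 1 - n = (j - n) + 1 := by omega
      rw [e2]
      exact halt' (j - n) (by omega)
  · intro j hj
    by_cases hc : j < n
    · have h := hcent j hc
      unfold Cent at h ⊢
      dsimp only
      simp only [if_pos hc]
      exact h
    · have h := hcent' (j - n) (by omega)
      unfold Cent at h ⊢
      dsimp only
      simp only [if_neg hc]
      exact h
  · rw [prod_split]
    congr 1
    · apply prod_congr
      intro j hj
      rw [if_pos hj]
    · apply prod_congr
      intro j hj
      rw [if_neg (by omega)]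
      congr 1
      omega

lemma prod_mul_decomp (n m : ℕ) (hn : 0 < n) (hm : 0 < m) (a a' : ℕ → C) (c : C) (r : ℂ)
    (hsplit : a (n - 1) * a' 0 = c + r • (1 : C)) :
    ((List.range n).map a).prod * ((List.range m).map a').prod
      = ((List.range (n + m - 1)).map
          (fun j => if j < n - 1 then a j else if j = n - 1 then c else a' (j - n + 1))).prod
        + r • (((List.range (n - 1)).map a).prod
            * ((List.range (m - 1)).map (fun k => a' (k + 1))).prod) := by
  obtain ⟨n', rfl⟩ : ∃ n', n = n' + 1 := ⟨n - 1, by omega⟩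
  obtain ⟨m', rfl⟩ : ∃ m', m = m' + 1 := ⟨m - 1, by omega⟩
  simp only [Nat.add_sub_cancel] at hsplit ⊢
  rw [show n' + 1 + (m' + 1) - 1 = (n' + 1) + m' from by omega]
  rw [prod_split (n' + 1) m', prod_succ n' a, prod_shift m' a']
  have h1 : ((List.range (n' + 1)).map
      (fun j => if j < n' then a j else if j = n' then c else a' (j - (n' + 1) + 1))).prod
      = ((List.range n').map a).prod * c := by
    rw [prod_succ]
    congr 1
    · apply prod_congr
      intro j hj
      rw [if_pos hj]
    · rw [if_neg (lt_irrefl n'), if_pos rfl]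
  have h2 : ((List.range m').map (fun k =>
      if n' + 1 + k < n' then a (n' + 1 + k)
      else if n' + 1 + k = n' then c else a' (n' + 1 + k - (n' + 1) + 1))).prod
      = ((List.range m').map (fun k => a' (k + 1))).prod := by
    apply prod_congr
    intro j hj
    rw [if_neg (by omega), if_neg (by omega)]
    congr 1
    omega
  rw [h1, h2]
  rw [mul_assoc ((List.range n').map a).prod (a n'),
    ← mul_assoc (a n') (a' 0), hsplit, add_mul, smul_mul_assoc, one_mul, mul_add,
    mul_smul_comm, ← mul_assoc]

lemma merge_mem₁ (hφ₁ : φ₁ 1 = 1) (n m : ℕ) (hn : 0 < n) (hm : 0 < m)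
    (i : ℕ → Fin 2) (a : ℕ → C) (i' : ℕ → Fin 2) (a' : ℕ → C)
    (halt : ∀ j, j + 1 < n → i j ≠ i (j + 1)) (hcent : ∀ j < n, Cent ι₁ ι₂ φ₁ φ₂ i a j)
    (halt' : ∀ j, j + 1 < m → i' j ≠ i' (j + 1)) (hcent' : ∀ j < m, Cent ι₁ ι₂ φ₁ φ₂ i' a' j)
    (b b' : A₁) (hiL : i (n - 1) = 0) (hi0 : i' 0 = 0) :
    ((List.range (n + m - 1)).map
      (fun j => if j < n - 1 then a j
        else if j = n - 1 then ι₁ (b * b' - φ₁ (b * b') • 1) else a' (j - n + 1))).prod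
      ∈ WSet ι₁ ι₂ φ₁ φ₂ := by
  refine ⟨n + m - 1, by omega, (fun j => if j < n then i j else i' (j - n + 1)), _, ?_, ?_, rfl⟩
  · intro j hj
    dsimp only
    rcases Nat.lt_trichotomy (j + 1) n with hc | hc | hc
    · simp only [if_pos (show j < n by omega), if_pos hc]
      exact halt j hc
    · simp only [if_pos (show j < n by omega), if_neg (show ¬ (j + 1 < n) by omega)]
      rw [show j + 1 - n + 1 = 1 from by omega, show j = n - 1 from by omega, hiL, ← hi0]
      exact halt' 0 (by omega)
    · simp only [if_neg (show ¬ (j < n) by omega), if_neg (show ¬ (j + 1 < n) by omega)]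
      rw [show j + 1 - n + 1 = (j - n + 1) + 1 from by omega]
      exact halt' (j - n + 1) (by omega)
  · intro j hj
    rcases Nat.lt_trichotomy j (n - 1) with hc | hc | hc
    · have h := hcent j (by omega)
      unfold Cent at h ⊢
      dsimp only
      simp only [if_pos (show j < n by omega), if_pos hc]
      exact h
    · subst hc
      unfold Cent
      dsimp only
      rw [if_pos (show n - 1 < n by omega), if_neg (lt_irrefl (n-1)), if_pos rfl]
      refine Or.inl ⟨hiL, b * b' - φ₁ (b * b') • 1, rfl, ?_⟩
      rw [map_sub, map_smul, hφ₁, smul_eq_mul, mul_one, sub_self]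
    · have h := hcent' (j - n + 1) (by omega)
      unfold Cent at h ⊢
      dsimp only
      simp only [if_neg (show ¬ (j < n) by omega), if_neg (show ¬ (j < n - 1) by omega),
        if_neg (show ¬ (j = n - 1) by omega)]
      exact h

lemma merge_mem₂ (hφ₂ : φ₂ 1 = 1) (n m : ℕ) (hn : 0 < n) (hm : 0 < m)
    (i : ℕ → Fin 2) (a : ℕ → C) (i' : ℕ → Fin 2) (a' : ℕ → C)
    (halt : ∀ j, j + 1 < n → i j ≠ i (j + 1)) (hcent : ∀ j < n, Cent ι₁ ι₂ φ₁ φ₂ i a j)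
    (halt' : ∀ j, j + 1 < m → i' j ≠ i' (j + 1)) (hcent' : ∀ j < m, Cent ι₁ ι₂ φ₁ φ₂ i' a' j)
    (b b' : A₂) (hiL : i (n - 1) = 1) (hi0 : i' 0 = 1) :
    ((List.range (n + m - 1)).map
      (fun j => if j < n - 1 then a j
        else if j = n - 1 then ι₂ (b * b' - φ₂ (b * b') • 1) else a' (j - n + 1))).prod
      ∈ WSet ι₁ ι₂ φ₁ φ₂ := by
  refine ⟨n + m - 1, by omega, (fun j => if j < n then i j else i' (j - n + 1)), _, ?_, ?_, rfl⟩
  · intro j hj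
    dsimp only
    rcases Nat.lt_trichotomy (j + 1) n with hc | hc | hc
    · simp only [if_pos (show j < n by omega), if_pos hc]
      exact halt j hc
    · simp only [if_pos (show j < n by omega), if_neg (show ¬ (j + 1 < n) by omega)]
      rw [show j + 1 - n + 1 = 1 from by omega, show j = n - 1 from by omega, hiL, ← hi0]
      exact halt' 0 (by omega)
    · simp only [if_neg (show ¬ (j < n) by omega), if_neg (show ¬ (j + 1 < n) by omega)]
      rw [show j + 1 - n + 1 = (j - n + 1) + 1 from by omega]
      exact halt' (j - n + 1) (by omega)
  · intro j hj
    rcases Nat.lt_trichotomy j (n - 1) with hc | hc | hc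
    · have h := hcent j (by omega)
      unfold Cent at h ⊢
      dsimp only
      simp only [if_pos (show j < n by omega), if_pos hc]
      exact h
    · subst hc
      unfold Cent
      dsimp only
      rw [if_pos (show n - 1 < n by omega), if_neg (lt_irrefl (n-1)), if_pos rfl]
      refine Or.inr ⟨hiL, b * b' - φ₂ (b * b') • 1, rfl, ?_⟩
      rw [map_sub, map_smul, hφ₂, smul_eq_mul, mul_one, sub_self]
    · have h := hcent' (j - n + 1) (by omega)
      unfold Cent at h ⊢
      dsimp only
      simp only [if_neg (show ¬ (j < n) by omega), if_neg (show ¬ (j < n - 1) by omega),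
        if_neg (show ¬ (j = n - 1) by omega)]
      exact h

lemma wordMul (hφ₁ : φ₁ 1 = 1) (hφ₂ : φ₂ 1 = 1) : ∀ N n m, n + m ≤ N →
    ∀ (i : ℕ → Fin 2) (a : ℕ → C) (i' : ℕ → Fin 2) (a' : ℕ → C),
    (∀ j, j + 1 < n → i j ≠ i (j + 1)) → (∀ j < n, Cent ι₁ ι₂ φ₁ φ₂ i a j) →
    (∀ j, j + 1 < m → i' j ≠ i' (j + 1)) → (∀ j < m, Cent ι₁ ι₂ φ₁ φ₂ i' a' j) →
    ((List.range n).map a).prod * ((List.range m).map a').prod ∈ DSpan ι₁ ι₂ φ₁ φ₂ := by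
  intro N
  induction N with
  | zero =>
    intro n m hnm i a i' a' _ _ _ _
    have hn : n = 0 := by omega
    have hm : m = 0 := by omega
    subst hn; subst hm
    rw [List.range_zero, List.map_nil, List.prod_nil, one_mul]
    exact Submodule.subset_span (Set.mem_union_left _ rfl)
  | succ N ihN =>
    intro n m hnm i a i' a' halt hcent halt' hcent'
    rcases Nat.eq_zero_or_pos n with hn | hn
    · subst hn
      rw [List.range_zero, List.map_nil, List.prod_nil, one_mul]
      rcases Nat.eq_zero_or_pos m with hm | hm
      · subst hm
        rw [List.range_zero, List.map_nil, List.prod_nil]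
        exact Submodule.subset_span (Set.mem_union_left _ rfl)
      · exact Submodule.subset_span
          (Set.mem_union_right _ ⟨m, hm, i', a', halt', hcent', rfl⟩)
    rcases Nat.eq_zero_or_pos m with hm | hm
    · subst hm
      rw [List.range_zero, List.map_nil, List.prod_nil, mul_one]
      exact Submodule.subset_span (Set.mem_union_right _ ⟨n, hn, i, a, halt, hcent, rfl⟩)
    by_cases hdiff : i (n - 1) = i' 0
    · rcases hcent (n - 1) (by omega) with ⟨hiL, b, habL, hb⟩ | ⟨hiL, b, habL, hb⟩
      · have hi0 : i' 0 = 0 := by rw [← hdiff, hiL]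
        rcases hcent' 0 hm with ⟨-, b', hab', hb'⟩ | ⟨hii, hrest⟩
        swap
        · rw [hi0] at hii
          exact absurd hii (by decide)
        have hsplit : a (n - 1) * a' 0
            = ι₁ (b * b' - φ₁ (b * b') • 1) + (φ₁ (b * b')) • (1 : C) := by
          rw [habL, hab', map_sub, map_smul, map_one, ← map_mul, sub_add_cancel]
        rw [prod_mul_decomp n m hn hm a a' _ _ hsplit]
        refine Submodule.add_mem _ ?_ (Submodule.smul_mem _ _ ?_)
        · exact Submodule.subset_span (Set.mem_union_right _
            (merge_mem₁ ι₁ ι₂ φ₁ φ₂ hφ₁ n m hn hm i a i' a'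
              halt hcent halt' hcent' b b' hiL hi0))
        · exact ihN (n - 1) (m - 1) (by omega) i a (fun j => i' (j + 1)) (fun j => a' (j + 1))
            (fun j hj => halt j (by omega)) (fun j hj => hcent j (by omega))
            (fun j hj => halt' (j + 1) (by omega)) (fun j hj => hcent' (j + 1) (by omega))
      · have hi0 : i' 0 = 1 := by rw [← hdiff, hiL]
        rcases hcent' 0 hm with ⟨hii, hrest⟩ | ⟨-, b', hab', hb'⟩
        · rw [hi0] at hii
          exact absurd hii (by decide)
        have hsplit : a (n - 1) * a' 0
            = ι₂ (b * b' - φ₂ (b * b') • 1) + (φ₂ (b * b')) • (1 : C) := by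
          rw [habL, hab', map_sub, map_smul, map_one, ← map_mul, sub_add_cancel]
        rw [prod_mul_decomp n m hn hm a a' _ _ hsplit]
        refine Submodule.add_mem _ ?_ (Submodule.smul_mem _ _ ?_)
        · exact Submodule.subset_span (Set.mem_union_right _
            (merge_mem₂ ι₁ ι₂ φ₁ φ₂ hφ₂ n m hn hm i a i' a'
              halt hcent halt' hcent' b b' hiL hi0))
        · exact ihN (n - 1) (m - 1) (by omega) i a (fun j => i' (j + 1)) (fun j => a' (j + 1))
            (fun j hj => halt j (by omega)) (fun j hj => hcent j (by omega))
            (fun j hj => halt' (j + 1) (by omega)) (fun j hj => hcent' (j + 1) (by omega))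
    · exact Submodule.subset_span (Set.mem_union_right _
        (concat_mem ι₁ ι₂ φ₁ φ₂ n m hn hm i a i' a' halt hcent halt' hcent' hdiff))

lemma mem_DSpan (hφ₁ : φ₁ 1 = 1) (hφ₂ : φ₂ 1 = 1)
    (hcoprod : ∀ (B : Type) [Ring B] [Algebra ℂ B] (f₁ : A₁ →ₐ[ℂ] B) (f₂ : A₂ →ₐ[ℂ] B),
      ∃! h : C →ₐ[ℂ] B, h.comp ι₁ = f₁ ∧ h.comp ι₂ = f₂) (x : C) :
    x ∈ DSpan ι₁ ι₂ φ₁ φ₂ := by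
  have h1D : (1 : C) ∈ DSpan ι₁ ι₂ φ₁ φ₂ :=
    Submodule.subset_span (Set.mem_union_left _ rfl)
  have hWD : ∀ w ∈ WSet ι₁ ι₂ φ₁ φ₂, w ∈ DSpan ι₁ ι₂ φ₁ φ₂ := fun w hw =>
    Submodule.subset_span (Set.mem_union_right _ hw)
  have hmul : ∀ x ∈ DSpan ι₁ ι₂ φ₁ φ₂, ∀ y ∈ DSpan ι₁ ι₂ φ₁ φ₂,
      x * y ∈ DSpan ι₁ ι₂ φ₁ φ₂ := by
    intro x hx
    induction hx using Submodule.span_induction with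
    | mem g hg =>
      intro y hy
      induction hy using Submodule.span_induction with
      | mem g' hg' =>
        rcases hg with hg | hg
        · rw [Set.mem_singleton_iff.mp hg, one_mul]
          exact Submodule.subset_span hg'
        · rcases hg' with hg' | hg'
          · rw [Set.mem_singleton_iff.mp hg', mul_one]
            exact hWD g hg
          · obtain ⟨n, hn, i, a, halt, hcent, rfl⟩ := hg
            obtain ⟨m, hm, i', a', halt', hcent', rfl⟩ := hg'
            exact wordMul ι₁ ι₂ φ₁ φ₂ hφ₁ hφ₂ (n + m) n m le_rfl i a i' a'
              halt hcent halt' hcent'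
      | zero => rw [mul_zero]; exact zero_mem _
      | add u v hu hv ihu ihv => rw [mul_add]; exact add_mem ihu ihv
      | smul r u hu ihu => rw [mul_smul_comm]; exact Submodule.smul_mem _ r ihu
    | zero => intro y hy; rw [zero_mul]; exact zero_mem _
    | add u v hu hv ihu ihv => intro y hy; rw [add_mul]; exact add_mem (ihu y hy) (ihv y hy)
    | smul r u hu ihu =>
      intro y hy
      rw [smul_mul_assoc]
      exact Submodule.smul_mem _ r (ihu y hy)
  have hg1 : ∀ b : A₁, ι₁ b ∈ DSpan ι₁ ι₂ φ₁ φ₂ := by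
    intro b
    have hw : ι₁ (b - φ₁ b • 1) ∈ WSet ι₁ ι₂ φ₁ φ₂ := by
      refine ⟨1, one_pos, (fun _ => 0), (fun _ => ι₁ (b - φ₁ b • 1)),
        fun j hj => absurd hj (by omega), ?_, ?_⟩
      · intro j hj
        exact Or.inl ⟨rfl, b - φ₁ b • 1, rfl,
          by rw [map_sub, map_smul, hφ₁, smul_eq_mul, mul_one, sub_self]⟩
      · rw [show List.range 1 = [0] from rfl]
        simp
    have hb : ι₁ b = ι₁ (b - φ₁ b • 1) + φ₁ b • 1 := by
      rw [map_sub, map_smul, map_one, sub_add_cancel]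
    rw [hb]
    exact add_mem (hWD _ hw) (Submodule.smul_mem _ _ h1D)
  have hg2 : ∀ b : A₂, ι₂ b ∈ DSpan ι₁ ι₂ φ₁ φ₂ := by
    intro b
    have hw : ι₂ (b - φ₂ b • 1) ∈ WSet ι₁ ι₂ φ₁ φ₂ := by
      refine ⟨1, one_pos, (fun _ => 1), (fun _ => ι₂ (b - φ₂ b • 1)),
        fun j hj => absurd hj (by omega), ?_, ?_⟩
      · intro j hj
        exact Or.inr ⟨rfl, b - φ₂ b • 1, rfl,
          by rw [map_sub, map_smul, hφ₂, smul_eq_mul, mul_one, sub_self]⟩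
      · rw [show List.range 1 = [0] from rfl]
        simp
    have hb : ι₂ b = ι₂ (b - φ₂ b • 1) + φ₂ b • 1 := by
      rw [map_sub, map_smul, map_one, sub_add_cancel]
    rw [hb]
    exact add_mem (hWD _ hw) (Submodule.smul_mem _ _ h1D)
  obtain ⟨h0, hh0, huniq0⟩ := hcoprod C ι₁ ι₂
  have hid : AlgHom.id ℂ C = h0 := huniq0 _ ⟨AlgHom.id_comp _, AlgHom.id_comp _⟩
  set S := Algebra.adjoin ℂ (Set.range ι₁ ∪ Set.range ι₂) with hSdef
  obtain ⟨g, ⟨hgc1, hgc2⟩, -⟩ := hcoprod S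
    (ι₁.codRestrict S (fun b => Algebra.subset_adjoin (Set.mem_union_left _ ⟨b, rfl⟩)))
    (ι₂.codRestrict S (fun b => Algebra.subset_adjoin (Set.mem_union_right _ ⟨b, rfl⟩)))
  have hval : S.val.comp g = h0 := by
    refine huniq0 _ ⟨?_, ?_⟩
    · rw [AlgHom.comp_assoc, hgc1]
      exact AlgHom.ext fun b => rfl
    · rw [AlgHom.comp_assoc, hgc2]
      exact AlgHom.ext fun b => rfl
  have heq : S.val.comp g = AlgHom.id ℂ C := hval.trans hid.symm
  have hS : ∀ z : C, z ∈ S := by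
    intro z
    have hz : S.val (g z) = z := DFunLike.congr_fun heq z
    rw [← hz]
    exact SetLike.coe_mem _
  have hx := hS x
  induction hx using Algebra.adjoin_induction with
  | mem y hy =>
    rcases hy with hy | hy
    · obtain ⟨b, rfl⟩ := hy
      exact hg1 b
    · obtain ⟨b, rfl⟩ := hy
      exact hg2 b
  | algebraMap r =>
    rw [Algebra.algebraMap_eq_smul_one]
    exact Submodule.smul_mem _ _ h1D
  | add u v hu hv ihu ihv => exact add_mem ihu ihv
  | mul u v hu hv ihu ihv => exact hmul u ihu v ihv

end Uniq

end FreePS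



/-- Given two non-commutative probability spaces `(A₁, φ₁)` and `(A₂, φ₂)` and a
free product (coproduct) `C` of the unital `ℂ`-algebras `A₁`, `A₂` (characterized
by its universal property, with canonical embeddings `ι₁`, `ι₂`), there is a unique
linear functional `φ` on `C` with `φ(1) = 1` that vanishes on all alternating
products of centered elements. -/
theorem freeProduct_state_exists_unique
    (A₁ A₂ C : Type) [Ring A₁] [Algebra ℂ A₁] [Ring A₂] [Algebra ℂ A₂]
    [Ring C] [Algebra ℂ C]
    (ι₁ : A₁ →ₐ[ℂ] C) (ι₂ : A₂ →ₐ[ℂ] C)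
    (hcoprod : ∀ (B : Type) [Ring B] [Algebra ℂ B] (f₁ : A₁ →ₐ[ℂ] B) (f₂ : A₂ →ₐ[ℂ] B),
      ∃! h : C →ₐ[ℂ] B, h.comp ι₁ = f₁ ∧ h.comp ι₂ = f₂)
    (φ₁ : A₁ →ₗ[ℂ] ℂ) (hφ₁ : φ₁ 1 = 1) (φ₂ : A₂ →ₗ[ℂ] ℂ) (hφ₂ : φ₂ 1 = 1) :
    ∃! φ : C →ₗ[ℂ] ℂ, φ 1 = 1 ∧
      ∀ (n : ℕ), 0 < n → ∀ (i : ℕ → Fin 2) (a : ℕ → C),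
        (∀ j, j + 1 < n → i j ≠ i (j + 1)) →
        (∀ j < n,
          (i j = 0 ∧ ∃ b : A₁, a j = ι₁ b ∧ φ₁ b = 0) ∨
          (i j = 1 ∧ ∃ b : A₂, a j = ι₂ b ∧ φ₂ b = 0)) →
        φ (((List.range n).map a).prod) = 0 := by
  classical
  obtain ⟨h, ⟨hc1, hc2⟩, -⟩ := hcoprod (Module.End ℂ (FreePS.V (FreePS.sgn φ₁ φ₂)))
    (FreePS.pialg _ φ₁ hφ₁ false (FreePS.eL φ₁ φ₂))
    (FreePS.pialg _ φ₂ hφ₂ true (FreePS.eR φ₁ φ₂))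
  set φ₀ : C →ₗ[ℂ] ℂ := (FreePS.vac φ₁ φ₂) ∘ₗ h.toLinearMap with hφ₀def
  have hone : φ₀ 1 = 1 := by
    show FreePS.vac φ₁ φ₂ (h.toLinearMap 1) = 1
    rw [show h.toLinearMap (1 : C) = 1 from map_one h, FreePS.vac_one]
  have hvan : ∀ (n : ℕ), 0 < n → ∀ (i : ℕ → Fin 2) (a : ℕ → C),
      (∀ j, j + 1 < n → i j ≠ i (j + 1)) →
      (∀ j < n,
        (i j = 0 ∧ ∃ b : A₁, a j = ι₁ b ∧ φ₁ b = 0) ∨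
        (i j = 1 ∧ ∃ b : A₂, a j = ι₂ b ∧ φ₂ b = 0)) →
      φ₀ (((List.range n).map a).prod) = 0 := by
    intro n hn i a halt hcent
    show FreePS.vac φ₁ φ₂ (h.toLinearMap _) = 0
    rw [show h.toLinearMap (((List.range n).map a).prod) = h (((List.range n).map a).prod)
      from rfl, FreePS.vac_apply]
    exact FreePS.Shead_nil_coeff _ _ _
      (FreePS.key_mem ι₁ ι₂ φ₁ hφ₁ φ₂ hφ₂ h hc1 hc2 n hn i a halt hcent)
  refine ⟨φ₀, ⟨hone, hvan⟩, ?_⟩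
  intro ψ hψ
  apply LinearMap.ext
  intro x
  have hx := FreePS.mem_DSpan ι₁ ι₂ φ₁ φ₂ hφ₁ hφ₂ hcoprod x
  induction hx using Submodule.span_induction with
  | mem g hg =>
    rcases hg with hg | hg
    · rw [Set.mem_singleton_iff.mp hg, hψ.1, hone]
    · obtain ⟨n, hn, i, a, halt, hcent, rfl⟩ := hg
      rw [hψ.2 n hn i a halt hcent, hvan n hn i a halt hcent]
  | zero => rw [map_zero, map_zero]
  | add u v hu hv ihu ihv => rw [map_add, map_add, ihu, ihv]
  | smul r u hu ihu => rw [map_smul, map_smul, ihu]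
end

section
/- Let ℓ be the left creation operator on the full Fock space F(ℂ) associated to a unit vector e, let Ω be the vacuum vector, and let φ(a) = ⟨Ω, aΩ⟩. Then for every k ≥ 0, φ((ℓ + ℓ*)^k) equals the number of non-crossing pairings of the set {1, …, k}. In particular this vanishes for k odd and equals the Catalan number C_{k/2} for k even. -/
/-- The full Fock space `F(ℂ)`, with orthonormal basis `Ω, e, e⊗e, …` indexed by `ℕ`. -/
noncomputable abbrev FockC : Type := lp (fun _ : ℕ => ℂ) 2

/-- `P` is a pairing of `{1, …, k}` (modelled as `Fin k`): a partition into
two-element blocks. -/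
def IsPairing {k : ℕ} (P : Finset (Finset (Fin k))) : Prop :=
  (∀ B ∈ P, B.card = 2) ∧ ∀ x : Fin k, ∃! B, B ∈ P ∧ x ∈ B

/-- A pairing is non-crossing if there are no `a < b < c < d` with `{a, c}` and
`{b, d}` both blocks. -/
def IsNonCrossingPairing {k : ℕ} (P : Finset (Finset (Fin k))) : Prop :=
  IsPairing P ∧
    ¬ ∃ a b c d : Fin k, a < b ∧ b < c ∧ c < d ∧
      ({a, c} : Finset (Fin k)) ∈ P ∧ ({b, d} : Finset (Fin k)) ∈ P

open Finset

attribute [local instance] Classical.propDecidable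

set_option maxHeartbeats 1000000

/-- number of nonnegative ±1 paths of length `k` from 0 to `n` -/
def W : ℕ → ℕ → ℕ
  | 0, n => if n = 0 then 1 else 0
  | (k+1), n => (match n with | 0 => 0 | (j+1) => W k j) + W k (n + 1)

lemma W_succ_zero (k : ℕ) : W (k+1) 0 = W k 1 := by simp [W]
lemma W_succ_succ (k n : ℕ) : W (k+1) (n+1) = W k n + W k (n+2) := by simp [W]

lemma W_parity : ∀ k n, (k + n) % 2 = 1 → W k n = 0 := by
  intro k
  induction k with
  | zero =>
    intro n h
    have : n ≠ 0 := by omega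
    simp [W, this]
  | succ k ih =>
    intro n h
    match n with
    | 0 => rw [W_succ_zero]; exact ih 1 (by omega)
    | (m+1) => rw [W_succ_succ, ih m (by omega), ih (m+2) (by omega)]

lemma W_closed : ∀ k n u : ℕ, k + n = 2 * u →
    (W k n : ℤ) = Nat.choose k u - Nat.choose k (u+1) := by
  intro k
  induction k with
  | zero =>
    intro n u h
    match n, u, h with
    | 0, 0, _ => simp [W]
    | (n+1), u, h =>
      have hu : u ≠ 0 := by omega
      have : W 0 (n+1) = 0 := by simp [W]
      rw [this]
      rw [Nat.choose_eq_zero_of_lt (by omega), Nat.choose_eq_zero_of_lt (by omega)]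
      simp
  | succ k ih =>
    intro n u h
    match n with
    | 0 =>
      -- k + 1 = 2u, u ≥ 1, W (k+1) 0 = W k 1
      have hu : 1 ≤ u := by omega
      obtain ⟨v, rfl⟩ : ∃ v, u = v + 1 := ⟨u - 1, by omega⟩
      rw [W_succ_zero, ih 1 (v+1) (by omega)]
      -- goal: C(k,v+1) - C(k,v+2) = C(k+1,v+1) - C(k+1,v+2)
      rw [Nat.choose_succ_succ k (v+1), Nat.choose_succ_succ k v]
      have hsym : Nat.choose k v = Nat.choose k (v+1) := by
        have hk : k = 2 * v + 1 := by omega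
        subst hk
        rw [← Nat.choose_symm (by omega : v ≤ 2*v+1)]
        congr 1
        omega
      push_cast
      rw [hsym]
      ring
    | (m+1) =>
      have hu : 1 ≤ u := by omega
      obtain ⟨v, rfl⟩ : ∃ v, u = v + 1 := ⟨u - 1, by omega⟩
      rw [W_succ_succ, Nat.choose_succ_succ k (v+1), Nat.choose_succ_succ k v]
      have h1 : (W k m : ℤ) = Nat.choose k v - Nat.choose k (v+1) := ih m v (by omega)
      have h2 : (W k (m+2) : ℤ) = Nat.choose k (v+1) - Nat.choose k (v+2) := ih (m+2) (v+1) (by omega)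
      push_cast
      push_cast at h1 h2
      rw [h1, h2]
      ring

lemma W_even (m : ℕ) : (W (2*m) 0 : ℤ) = Nat.choose (2*m) m - Nat.choose (2*m) (m+1) :=
  W_closed (2*m) 0 m (by omega)

lemma catalan_frac (m : ℕ) :
    (Nat.choose (2*m) m : ℂ) - (Nat.choose (2*m) (m+1) : ℂ) = (Nat.choose (2*m) m : ℂ) / (m+1) := by
  have key : (Nat.choose (2*m) (m+1)) * (m+1) = Nat.choose (2*m) m * m := by
    have := Nat.choose_succ_right_eq (2*m) m
    rw [this]
    congr 1
    omega
  have hm1 : ((m : ℂ) + 1) ≠ 0 := by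
    exact Nat.cast_add_one_ne_zero m
  field_simp
  have : ((Nat.choose (2*m) (m+1) : ℂ)) * (m+1) = (Nat.choose (2*m) m : ℂ) * m := by
    exact_mod_cast congrArg (Nat.cast : ℕ → ℂ) key
  push_cast
  linear_combination -this

/-- step of a letter -/
def stp (b : Bool) : ℤ := if b then 1 else -1

/-- height of the path after `t` steps -/
def ht {k : ℕ} (f : Fin k → Bool) : ℕ → ℤ
  | 0 => 0
  | (t+1) => ht f t + (if h : t < k then stp (f ⟨t, h⟩) else 0)

lemma ht_succ_lt {k : ℕ} (f : Fin k → Bool) {t : ℕ} (h : t < k) :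
    ht f (t+1) = ht f t + stp (f ⟨t, h⟩) := by
  simp [ht, h]

lemma ht_succ_ge {k : ℕ} (f : Fin k → Bool) {t : ℕ} (h : ¬ t < k) :
    ht f (t+1) = ht f t := by
  simp [ht, h]

lemma ht_stable {k : ℕ} (f : Fin k → Bool) {t : ℕ} (h : k ≤ t) : ht f t = ht f k := by
  induction t with
  | zero =>
    have hk : k = 0 := by omega
    subst hk
    rfl
  | succ t ih =>
    rcases Nat.eq_or_lt_of_le h with h' | h'
    · subst h'
      rfl
    · rw [ht_succ_ge f (by omega), ih (by omega)]

def upS {k : ℕ} (f : Fin k → Bool) (s t : ℕ) : Finset (Fin k) :=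
  univ.filter (fun i => s ≤ i.val ∧ i.val < t ∧ f i = true)

def dnS {k : ℕ} (f : Fin k → Bool) (s t : ℕ) : Finset (Fin k) :=
  univ.filter (fun i => s ≤ i.val ∧ i.val < t ∧ f i = false)

lemma mem_upS {k : ℕ} {f : Fin k → Bool} {s t : ℕ} {i : Fin k} :
    i ∈ upS f s t ↔ s ≤ i.val ∧ i.val < t ∧ f i = true := by simp [upS]

lemma mem_dnS {k : ℕ} {f : Fin k → Bool} {s t : ℕ} {i : Fin k} :
    i ∈ dnS f s t ↔ s ≤ i.val ∧ i.val < t ∧ f i = false := by simp [dnS]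

lemma ht_diff {k : ℕ} (f : Fin k → Bool) {s t : ℕ} (hst : s ≤ t) :
    ht f t - ht f s = (upS f s t).card - (dnS f s t).card := by
  induction t with
  | zero =>
    have hs : s = 0 := by omega
    subst hs
    have h1 : upS f 0 0 = ∅ := by ext i; simp [mem_upS]
    have h2 : dnS f 0 0 = ∅ := by ext i; simp [mem_dnS]
    simp [h1, h2]
  | succ t ih =>
    rcases Nat.eq_or_lt_of_le hst with h' | h'
    · subst h'
      have h1 : upS f (t+1) (t+1) = ∅ := by ext i; simp [mem_upS]; omega
      have h2 : dnS f (t+1) (t+1) = ∅ := by ext i; simp [mem_dnS]; omega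
      simp [h1, h2]
    · have hst' : s ≤ t := by omega
      by_cases h : t < k
      · rcases Bool.eq_false_or_eq_true (f ⟨t, h⟩) with hf | hf
        swap
        · -- f t = false : down step
          have hup : upS f s (t+1) = upS f s t := by
            ext i
            simp only [mem_upS]
            constructor
            · rintro ⟨h1, h2, h3⟩
              refine ⟨h1, ?_, h3⟩
              rcases Nat.lt_succ_iff_lt_or_eq.mp h2 with h4 | h4
              · exact h4
              · exfalso; have : i = ⟨t, h⟩ := Fin.ext h4
                rw [this] at h3; rw [h3] at hf; exact absurd hf (by simp)
            · rintro ⟨h1, h2, h3⟩; exact ⟨h1, by omega, h3⟩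
          have hdn : dnS f s (t+1) = insert ⟨t, h⟩ (dnS f s t) := by
            ext i
            simp only [mem_dnS, Finset.mem_insert]
            constructor
            · rintro ⟨h1, h2, h3⟩
              rcases Nat.lt_succ_iff_lt_or_eq.mp h2 with h4 | h4
              · exact Or.inr ⟨h1, h4, h3⟩
              · exact Or.inl (Fin.ext h4)
            · rintro (rfl | ⟨h1, h2, h3⟩)
              · exact ⟨hst', Nat.lt_succ_self t, hf⟩
              · exact ⟨h1, by omega, h3⟩
          have hnotmem : (⟨t, h⟩ : Fin k) ∉ dnS f s t := by
            simp [mem_dnS]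
          rw [ht_succ_lt f h, hup, hdn, Finset.card_insert_of_notMem hnotmem, hf]
          simp only [stp]
          push_cast
          linarith [ih hst']
        · -- f t = true : up step
          have hdn : dnS f s (t+1) = dnS f s t := by
            ext i
            simp only [mem_dnS]
            constructor
            · rintro ⟨h1, h2, h3⟩
              refine ⟨h1, ?_, h3⟩
              rcases Nat.lt_succ_iff_lt_or_eq.mp h2 with h4 | h4
              · exact h4
              · exfalso; have : i = ⟨t, h⟩ := Fin.ext h4
                rw [this] at h3; rw [h3] at hf; exact absurd hf (by simp)
            · rintro ⟨h1, h2, h3⟩; exact ⟨h1, by omega, h3⟩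
          have hup : upS f s (t+1) = insert ⟨t, h⟩ (upS f s t) := by
            ext i
            simp only [mem_upS, Finset.mem_insert]
            constructor
            · rintro ⟨h1, h2, h3⟩
              rcases Nat.lt_succ_iff_lt_or_eq.mp h2 with h4 | h4
              · exact Or.inr ⟨h1, h4, h3⟩
              · exact Or.inl (Fin.ext h4)
            · rintro (rfl | ⟨h1, h2, h3⟩)
              · exact ⟨hst', Nat.lt_succ_self t, hf⟩
              · exact ⟨h1, by omega, h3⟩
          have hnotmem : (⟨t, h⟩ : Fin k) ∉ upS f s t := by
            simp [mem_upS]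
          rw [ht_succ_lt f h, hdn, hup, Finset.card_insert_of_notMem hnotmem, hf]
          simp only [stp]
          push_cast
          linarith [ih hst']
      · have hup : upS f s (t+1) = upS f s t := by
          ext i
          simp only [mem_upS]
          have := i.isLt
          constructor
          · rintro ⟨h1, h2, h3⟩; exact ⟨h1, by omega, h3⟩
          · rintro ⟨h1, h2, h3⟩; exact ⟨h1, by omega, h3⟩
        have hdn : dnS f s (t+1) = dnS f s t := by
          ext i
          simp only [mem_dnS]
          have := i.isLt
          constructor
          · rintro ⟨h1, h2, h3⟩; exact ⟨h1, by omega, h3⟩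
          · rintro ⟨h1, h2, h3⟩; exact ⟨h1, by omega, h3⟩
        rw [ht_succ_ge f h, hup, hdn, ih hst']

/-- Dyck-path prefixes of length `k` ending at height `n` -/
noncomputable def Dset (k n : ℕ) : Finset (Fin k → Bool) :=
  univ.filter (fun f => (∀ t, 0 ≤ ht f t) ∧ ht f k = (n : ℤ))

lemma mem_Dset {k n : ℕ} {f : Fin k → Bool} :
    f ∈ Dset k n ↔ (∀ t, 0 ≤ ht f t) ∧ ht f k = (n : ℤ) := by simp [Dset]

lemma ht_snoc_le {k : ℕ} (g : Fin k → Bool) (b : Bool) :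
    ∀ {t : ℕ}, t ≤ k → ht (Fin.snoc g b : Fin (k+1) → Bool) t = ht g t := by
  intro t
  induction t with
  | zero => intro _; rfl
  | succ t ih =>
    intro h
    have h1 : t < k := by omega
    rw [ht_succ_lt (Fin.snoc g b) (by omega : t < k + 1), ht_succ_lt g h1, ih (by omega)]
    congr 2
    exact @Fin.snoc_castSucc k (fun _ => Bool) b g ⟨t, h1⟩

lemma ht_snoc_top {k : ℕ} (g : Fin k → Bool) (b : Bool) :
    ht (Fin.snoc g b : Fin (k+1) → Bool) (k+1) = ht g k + stp b := by
  rw [ht_succ_lt (Fin.snoc g b) (Nat.lt_succ_self k), ht_snoc_le g b (le_refl k)]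
  congr 1
  have : (⟨k, Nat.lt_succ_self k⟩ : Fin (k+1)) = Fin.last k := rfl
  rw [this, Fin.snoc_last]

lemma snoc_injective {k : ℕ} (b : Bool) :
    Function.Injective (fun g : Fin k → Bool => (Fin.snoc g b : Fin (k+1) → Bool)) := by
  intro g1 g2 h
  funext i
  have := congrFun h (Fin.castSucc i)
  simpa [Fin.snoc_castSucc] using this

lemma snoc_mem_Dset_iff {k : ℕ} (g : Fin k → Bool) (b : Bool) (n : ℕ) :
    (Fin.snoc g b : Fin (k+1) → Bool) ∈ Dset (k+1) n ↔
      (∀ t, 0 ≤ ht g t) ∧ ht g k + stp b = (n : ℤ) := by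
  rw [mem_Dset]
  constructor
  · rintro ⟨hnn, hend⟩
    rw [ht_snoc_top] at hend
    refine ⟨?_, hend⟩
    intro t
    by_cases h : t ≤ k
    · rw [← ht_snoc_le g b h]; exact hnn t
    · rw [ht_stable g (by omega : k ≤ t)]
      rw [← ht_snoc_le g b (le_refl k)]
      exact hnn k
  · rintro ⟨hnn, hend⟩
    constructor
    · intro t
      by_cases h : t ≤ k
      · rw [ht_snoc_le g b h]; exact hnn t
      · rw [ht_stable (Fin.snoc g b) (by omega : k + 1 ≤ t), ht_snoc_top, hend]
        positivity
    · rw [ht_snoc_top, hend]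

lemma Dset_card : ∀ k n : ℕ, (Dset k n).card = W k n := by
  intro k
  induction k with
  | zero =>
    intro n
    rcases Nat.eq_zero_or_pos n with rfl | hn
    · have : Dset 0 0 = univ := by
        ext f
        simp only [mem_Dset, Finset.mem_univ, iff_true]
        have hall : ∀ t, ht f t = 0 := by
          intro t
          rw [ht_stable f (Nat.zero_le t)]
          rfl
        exact ⟨fun t => le_of_eq (hall t).symm, hall 0⟩
      rw [this]
      simp [W]
    · have : Dset 0 n = ∅ := by
        ext f
        simp only [mem_Dset, Finset.notMem_empty, iff_false, not_and]
        intro _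
        have : ht f 0 = 0 := rfl
        rw [this]
        intro h
        exact absurd h.symm (by exact_mod_cast Nat.pos_iff_ne_zero.mp hn)
      rw [this]
      have : n ≠ 0 := by omega
      simp [W, this]
  | succ k ih =>
    intro n
    match n with
    | 0 =>
      have himg : Dset (k+1) 0
          = (Dset k 1).image (fun g : Fin k → Bool => (Fin.snoc g false : Fin (k+1) → Bool)) := by
        ext f
        constructor
        · intro hf
          have hsn : f = Fin.snoc (Fin.init f) (f (Fin.last k)) := (Fin.snoc_init_self f).symm
          rw [hsn, snoc_mem_Dset_iff] at hf
          obtain ⟨hnn, hend⟩ := hf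
          rw [Finset.mem_image]
          rcases Bool.eq_false_or_eq_true (f (Fin.last k)) with hb | hb
          · exfalso
            rw [hb] at hend
            simp [stp] at hend
            have := hnn k
            omega
          · refine ⟨Fin.init f, ?_, by rw [← hb]; exact Fin.snoc_init_self f⟩
            rw [hb] at hend
            simp [stp] at hend
            rw [mem_Dset]
            exact ⟨hnn, by omega⟩
        · intro hf
          rw [Finset.mem_image] at hf
          obtain ⟨g, hg, rfl⟩ := hf
          rw [snoc_mem_Dset_iff]
          rw [mem_Dset] at hg
          refine ⟨hg.1, ?_⟩
          rw [hg.2]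
          simp [stp]
      rw [himg, Finset.card_image_of_injective _ (snoc_injective false), ih 1, W_succ_zero]
    | (m+1) =>
      have himg : Dset (k+1) (m+1) =
          (Dset k m).image (fun g : Fin k → Bool => (Fin.snoc g true : Fin (k+1) → Bool)) ∪
            (Dset k (m+2)).image (fun g : Fin k → Bool => (Fin.snoc g false : Fin (k+1) → Bool)) := by
        ext f
        constructor
        · intro hf
          have hsn : f = Fin.snoc (Fin.init f) (f (Fin.last k)) := (Fin.snoc_init_self f).symm
          rw [hsn, snoc_mem_Dset_iff] at hf
          obtain ⟨hnn, hend⟩ := hf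
          rw [Finset.mem_union, Finset.mem_image, Finset.mem_image]
          rcases Bool.eq_false_or_eq_true (f (Fin.last k)) with hb | hb
          · left
            refine ⟨Fin.init f, ?_, by rw [← hb]; exact Fin.snoc_init_self f⟩
            rw [hb] at hend
            simp [stp] at hend
            rw [mem_Dset]
            exact ⟨hnn, by push_cast; omega⟩
          · right
            refine ⟨Fin.init f, ?_, by rw [← hb]; exact Fin.snoc_init_self f⟩
            rw [hb] at hend
            simp [stp] at hend
            rw [mem_Dset]
            exact ⟨hnn, by push_cast; omega⟩
        · intro hf
          rw [Finset.mem_union, Finset.mem_image, Finset.mem_image] at hf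
          rcases hf with ⟨g, hg, rfl⟩ | ⟨g, hg, rfl⟩ <;>
            rw [snoc_mem_Dset_iff] <;> rw [mem_Dset] at hg <;>
              refine ⟨hg.1, ?_⟩ <;> rw [hg.2] <;> simp [stp] <;> push_cast <;> ring
      have hdisj : Disjoint
          ((Dset k m).image (fun g : Fin k → Bool => (Fin.snoc g true : Fin (k+1) → Bool)))
          ((Dset k (m+2)).image (fun g : Fin k → Bool => (Fin.snoc g false : Fin (k+1) → Bool))) := by
        rw [Finset.disjoint_left]
        rintro f hf1 hf2
        rw [Finset.mem_image] at hf1 hf2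
        obtain ⟨g1, _, h1⟩ := hf1
        obtain ⟨g2, _, h2⟩ := hf2
        have := congrFun (h1.trans h2.symm) (Fin.last k)
        simp [Fin.snoc_last] at this
      rw [himg, Finset.card_union_of_disjoint hdisj,
        Finset.card_image_of_injective _ (snoc_injective true),
        Finset.card_image_of_injective _ (snoc_injective false), ih m, ih (m+2), W_succ_succ]

noncomputable def cands {k : ℕ} (f : Fin k → Bool) (i : Fin k) : Finset (Fin k) :=
  univ.filter (fun j => i < j ∧ ht f (j.val+1) < ht f (i.val+1))

noncomputable def Mm {k : ℕ} (f : Fin k → Bool) (i : Fin k) : Fin k :=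
  if h : (cands f i).Nonempty then (cands f i).min' h else i

noncomputable def openerFun {k : ℕ} (P : Finset (Finset (Fin k))) : Fin k → Bool :=
  fun i => decide (∃ j, i < j ∧ ({i, j} : Finset (Fin k)) ∈ P)

noncomputable def pairingOf {k : ℕ} (f : Fin k → Bool) : Finset (Finset (Fin k)) :=
  (univ.filter (fun i => f i = true)).image (fun i => ({i, Mm f i} : Finset (Fin k)))

lemma mem_cands {k : ℕ} {f : Fin k → Bool} {i j : Fin k} :
    j ∈ cands f i ↔ i < j ∧ ht f (j.val+1) < ht f (i.val+1) := by simp [cands]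

lemma ht_step {k : ℕ} (f : Fin k → Bool) (i : Fin k) :
    ht f (i.val+1) = ht f i.val + stp (f i) := ht_succ_lt f i.isLt

section dyck

variable {k : ℕ} {f : Fin k → Bool}

lemma cands_nonempty (hnn : ∀ t, 0 ≤ ht f t) (hend : ht f k = 0)
    {i : Fin k} (hi : f i = true) : (cands f i).Nonempty := by
  have hstep : ht f (i.val+1) = ht f i.val + 1 := by
    rw [ht_step f i, hi]; rfl
  have h1 : 1 ≤ ht f (i.val+1) := by have := hnn i.val; omega
  have hik : i.val + 1 ≤ k := i.isLt
  have hlt : i.val < k - 1 := by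
    rcases Nat.lt_or_ge i.val (k-1) with h | h
    · exact h
    · exfalso
      have : i.val + 1 = k := by omega
      rw [this] at hstep h1
      omega
  refine ⟨⟨k-1, by omega⟩, ?_⟩
  rw [mem_cands]
  constructor
  · exact hlt
  · have : (k - 1) + 1 = k := by omega
    simp only [this]
    omega

lemma Mm_spec (hnn : ∀ t, 0 ≤ ht f t) (hend : ht f k = 0)
    {i : Fin k} (hi : f i = true) :
    i < Mm f i ∧ ht f ((Mm f i).val+1) < ht f (i.val+1) ∧
      ∀ j ∈ cands f i, Mm f i ≤ j := by
  have hne := cands_nonempty hnn hend hi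
  rw [Mm, dif_pos hne]
  have hmem := Finset.min'_mem (cands f i) hne
  rw [mem_cands] at hmem
  exact ⟨hmem.1, hmem.2, fun j hj => Finset.min'_le _ _ hj⟩

/-- minimality: heights between `i` (exclusive) and `Mm f i` (inclusive) stay above `ht f (i+1)` -/
lemma ht_ge_on (hnn : ∀ t, 0 ≤ ht f t) (hend : ht f k = 0)
    {i : Fin k} (hi : f i = true) :
    ∀ t : ℕ, i.val < t → t ≤ (Mm f i).val → ht f (i.val+1) ≤ ht f t := by
  intro t h1 h2
  obtain ⟨hlt, hcand, hmin⟩ := Mm_spec hnn hend hi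
  rcases Nat.eq_or_lt_of_le (by omega : i.val + 1 ≤ t) with h3 | h3
  · rw [← h3]
  · have ht' : t - 1 < k := by
      have := (Mm f i).isLt; omega
    set j : Fin k := ⟨t - 1, ht'⟩ with hj
    have hjnot : j ∉ cands f i := by
      intro hc
      have := hmin j hc
      rw [Fin.le_def] at this
      simp only [hj] at this
      omega
    rw [mem_cands] at hjnot
    push_neg at hjnot
    have hij : i < j := by rw [Fin.lt_def]; simp [hj]; omega
    have := hjnot hij
    have hrw : j.val + 1 = t := by simp [hj]; omega
    rw [hrw] at this
    exact this

lemma Mm_closer (hnn : ∀ t, 0 ≤ ht f t) (hend : ht f k = 0)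
    {i : Fin k} (hi : f i = true) :
    f (Mm f i) = false ∧ ht f ((Mm f i).val+1) = ht f (i.val+1) - 1 ∧
      ht f (Mm f i).val = ht f (i.val+1) := by
  obtain ⟨hlt, hcand, hmin⟩ := Mm_spec hnn hend hi
  have h1 : ht f (i.val+1) ≤ ht f (Mm f i).val := by
    apply ht_ge_on hnn hend hi
    · exact hlt
    · exact le_refl _
  have hstep := ht_step f (Mm f i)
  rcases Bool.eq_false_or_eq_true (f (Mm f i)) with hb | hb
  · rw [hb] at hstep; simp [stp] at hstep; omega
  · refine ⟨hb, ?_, ?_⟩ <;> (rw [hb] at hstep; simp [stp] at hstep; omega)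

lemma Mm_ne_of_lt (hnn : ∀ t, 0 ≤ ht f t) (hend : ht f k = 0)
    {i i' : Fin k} (hi : f i = true) (hi' : f i' = true)
    (hlt : i.val < i'.val) : Mm f i ≠ Mm f i' := by
  intro h
  obtain ⟨hlt1, _, _⟩ := Mm_spec hnn hend hi
  obtain ⟨hlt2, _, _⟩ := Mm_spec hnn hend hi'
  obtain ⟨_, hv1, _⟩ := Mm_closer hnn hend hi
  obtain ⟨_, hv2, _⟩ := Mm_closer hnn hend hi'
  rw [← h] at hv2 hlt2
  have hi'j : i'.val ≤ (Mm f i).val := le_of_lt hlt2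
  have h2 : ht f (i.val+1) ≤ ht f i'.val := ht_ge_on hnn hend hi i'.val hlt hi'j
  have hstep : ht f (i'.val+1) = ht f i'.val + 1 := by
    rw [ht_step f i', hi']; rfl
  omega

lemma Mm_inj (hnn : ∀ t, 0 ≤ ht f t) (hend : ht f k = 0)
    {i i' : Fin k} (hi : f i = true) (hi' : f i' = true)
    (h : Mm f i = Mm f i') : i = i' := by
  rcases lt_trichotomy i.val i'.val with hlt | heq | hlt
  · exact absurd h (Mm_ne_of_lt hnn hend hi hi' hlt)
  · exact Fin.ext heq
  · exact absurd h.symm (Mm_ne_of_lt hnn hend hi' hi hlt)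

lemma pair_eq {a b c d : Fin k} (hab : a < b) (hcd : c < d)
    (h : ({a, b} : Finset (Fin k)) = {c, d}) : a = c ∧ b = d := by
  have ha : a ∈ ({c, d} : Finset (Fin k)) := h ▸ (Finset.mem_insert_self a {b})
  have hb : b ∈ ({c, d} : Finset (Fin k)) := h ▸ (by simp)
  have hc : c ∈ ({a, b} : Finset (Fin k)) := h ▸ (Finset.mem_insert_self c {d})
  have hd : d ∈ ({a, b} : Finset (Fin k)) := h ▸ (by simp)
  simp only [Finset.mem_insert, Finset.mem_singleton] at ha hb hc hd
  rw [Fin.lt_def] at hab hcd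
  constructor
  · rcases ha with rfl | rfl
    · rfl
    · exfalso
      rcases hb with rfl | rfl <;> rcases hc with h1 | h1 <;>
        (try rw [Fin.ext_iff] at h1) <;> omega
  · rcases hb with rfl | rfl
    · exfalso
      rcases ha with rfl | rfl <;> rcases hd with h1 | h1 <;>
        (try rw [Fin.ext_iff] at h1) <;> omega
    · rfl

lemma opener_closer_card (hend : ht f k = 0) :
    (univ.filter (fun i : Fin k => f i = true)).card
      = (univ.filter (fun i : Fin k => f i = false)).card := by
  have := ht_diff f (Nat.zero_le k)
  have hup : upS f 0 k = univ.filter (fun i : Fin k => f i = true) := by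
    ext i; simp [mem_upS, i.isLt]
  have hdn : dnS f 0 k = univ.filter (fun i : Fin k => f i = false) := by
    ext i; simp [mem_dnS, i.isLt]
  rw [hup, hdn] at this
  have h0 : ht f 0 = 0 := rfl
  rw [hend, h0] at this
  omega

lemma mem_pairingOf {B : Finset (Finset (Fin k))} :
    True := trivial

lemma pairingOf_mem_iff {f : Fin k → Bool} {B : Finset (Fin k)} :
    B ∈ pairingOf f ↔ ∃ i, f i = true ∧ B = {i, Mm f i} := by
  simp only [pairingOf, Finset.mem_image, Finset.mem_filter, Finset.mem_univ, true_and]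
  constructor
  · rintro ⟨i, hi, rfl⟩; exact ⟨i, hi, rfl⟩
  · rintro ⟨i, hi, rfl⟩; exact ⟨i, hi, rfl⟩

lemma pairingOf_isPairing (hnn : ∀ t, 0 ≤ ht f t) (hend : ht f k = 0) :
    IsPairing (pairingOf f) := by
  constructor
  · intro B hB
    rw [pairingOf_mem_iff] at hB
    obtain ⟨i, hi, rfl⟩ := hB
    exact Finset.card_pair (Fin.ne_of_lt (Mm_spec hnn hend hi).1)
  · intro x
    rcases Bool.eq_false_or_eq_true (f x) with hx | hx
    · -- x is an opener
      refine ⟨{x, Mm f x}, ⟨pairingOf_mem_iff.mpr ⟨x, hx, rfl⟩, by simp⟩, ?_⟩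
      rintro B ⟨hB, hxB⟩
      rw [pairingOf_mem_iff] at hB
      obtain ⟨i, hi, rfl⟩ := hB
      simp only [Finset.mem_insert, Finset.mem_singleton] at hxB
      rcases hxB with rfl | rfl
      · rfl
      · exfalso
        have := (Mm_closer hnn hend hi).1
        rw [this] at hx
        exact absurd hx (by simp)
    · -- x is a closer: surjectivity of Mm
      have hsurj := Finset.surj_on_of_inj_on_of_card_le
        (s := univ.filter (fun i : Fin k => f i = true))
        (t := univ.filter (fun i : Fin k => f i = false))
        (f := fun i _ => Mm f i)
        (fun i hi => by
          simp only [Finset.mem_filter, Finset.mem_univ, true_and] at hi ⊢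
          exact (Mm_closer hnn hend hi).1)
        (fun i i' hi hi' h => by
          simp only [Finset.mem_filter, Finset.mem_univ, true_and] at hi hi'
          exact Mm_inj hnn hend hi hi' h)
        (le_of_eq (opener_closer_card hend).symm)
      obtain ⟨i, hi0, hix0⟩ := hsurj x (by simp [hx])
      have hi : f i = true := by
        simpa using hi0
      have hix : x = Mm f i := hix0
      refine ⟨{i, Mm f i}, ⟨pairingOf_mem_iff.mpr ⟨i, hi, rfl⟩, by rw [← hix]; simp⟩, ?_⟩
      rintro B ⟨hB, hxB⟩
      rw [pairingOf_mem_iff] at hB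
      obtain ⟨i', hi', rfl⟩ := hB
      simp only [Finset.mem_insert, Finset.mem_singleton] at hxB
      rcases hxB with rfl | hxB
      · rw [hi'] at hx; exact absurd hx (by simp)
      · have : i' = i := Mm_inj hnn hend hi' hi (by rw [← hxB, hix])
        rw [this]

lemma pairingOf_nc (hnn : ∀ t, 0 ≤ ht f t) (hend : ht f k = 0) :
    ¬ ∃ a b c d : Fin k, a < b ∧ b < c ∧ c < d ∧
      ({a, c} : Finset (Fin k)) ∈ pairingOf f ∧ ({b, d} : Finset (Fin k)) ∈ pairingOf f := by
  rintro ⟨a, b, c, d, hab, hbc, hcd, hac, hbd⟩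
  rw [pairingOf_mem_iff] at hac hbd
  obtain ⟨i, hi, h1⟩ := hac
  obtain ⟨i', hi', h2⟩ := hbd
  obtain ⟨ha, hc⟩ := pair_eq (lt_trans hab hbc) (Mm_spec hnn hend hi).1 h1
  obtain ⟨hb, hd⟩ := pair_eq (lt_trans hbc hcd) (Mm_spec hnn hend hi').1 h2
  subst ha; subst hb
  -- c = Mm f a, d = Mm f b
  have hfa : f a = true := hi
  have hfb : f b = true := hi'
  -- heights
  have hv1 : ht f (c.val+1) = ht f (a.val+1) - 1 := by
    rw [hc]; exact (Mm_closer hnn hend hfa).2.1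
  have hv2 : ht f (b.val+1) ≤ ht f (c.val+1) := by
    have := ht_ge_on hnn hend hfb (c.val+1) (by rw [Fin.lt_def] at hbc; omega)
      (by rw [hd] at hcd; rw [Fin.lt_def] at hcd; omega)
    exact this
  have hv3 : ht f (a.val+1) ≤ ht f b.val := by
    apply ht_ge_on hnn hend hfa b.val
    · rw [Fin.lt_def] at hab; omega
    · rw [hc] at hbc; rw [Fin.lt_def] at hbc; omega
  have hstepb : ht f (b.val+1) = ht f b.val + 1 := by
    rw [ht_step f b, hfb]; rfl
  omega

lemma openerFun_pairingOf (hnn : ∀ t, 0 ≤ ht f t) (hend : ht f k = 0) :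
    openerFun (pairingOf f) = f := by
  funext i
  rcases Bool.eq_false_or_eq_true (f i) with hi | hi <;> rw [hi]
  · -- f i = true
    simp only [openerFun, decide_eq_true_eq]
    exact ⟨Mm f i, (Mm_spec hnn hend hi).1, pairingOf_mem_iff.mpr ⟨i, hi, rfl⟩⟩
  · -- f i = false
    simp only [openerFun, decide_eq_false_iff_not]
    rintro ⟨j, hij, hmem⟩
    rw [pairingOf_mem_iff] at hmem
    obtain ⟨i', hi', heq⟩ := hmem
    obtain ⟨rfl, _⟩ := pair_eq hij (Mm_spec hnn hend hi').1 heq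
    rw [hi'] at hi
    exact absurd hi (by simp)

end dyck

section pairing

variable {k : ℕ} {P : Finset (Finset (Fin k))}

lemma partner_exists (hP : IsPairing P) (x : Fin k) :
    ∃ y, y ≠ x ∧ ({x, y} : Finset (Fin k)) ∈ P := by
  obtain ⟨B, ⟨hBP, hxB⟩, _⟩ := hP.2 x
  obtain ⟨a, b, hab, rfl⟩ := Finset.card_eq_two.mp (hP.1 B hBP)
  simp only [Finset.mem_insert, Finset.mem_singleton] at hxB
  rcases hxB with rfl | rfl
  · exact ⟨b, fun h => hab h.symm, hBP⟩
  · exact ⟨a, fun h => hab h, by rwa [Finset.pair_comm]⟩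

lemma partner_unique (hP : IsPairing P) {x y y' : Fin k}
    (hy : ({x, y} : Finset (Fin k)) ∈ P) (hy' : ({x, y'} : Finset (Fin k)) ∈ P)
    (hne : y ≠ x) : y' = y := by
  have heq : ({x, y} : Finset (Fin k)) = {x, y'} :=
    (hP.2 x).unique ⟨hy, by simp⟩ ⟨hy', by simp⟩
  have : y' ∈ ({x, y} : Finset (Fin k)) := heq ▸ (by simp)
  simp only [Finset.mem_insert, Finset.mem_singleton] at this
  rcases this with rfl | rfl
  · -- y' = x : then y ∈ {x, x} hence y = x, contradiction
    exfalso
    have hyy : y ∈ ({y', y'} : Finset (Fin k)) := by rw [← heq]; simp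
    simp at hyy
    exact absurd hyy hne
  · rfl

variable (p : Fin k → Fin k)
  (hpne : ∀ x, p x ≠ x)
  (hpmem : ∀ x, ({x, p x} : Finset (Fin k)) ∈ P)

section withp

include hpne hpmem

lemma p_invol (hP : IsPairing P) (x : Fin k) : p (p x) = x := by
  apply partner_unique hP (x := p x) (y := x)
  · rw [Finset.pair_comm]; exact hpmem x
  · exact hpmem (p x)
  · exact (hpne x).symm

lemma p_uniq (hP : IsPairing P) {x y : Fin k} (hne : y ≠ x)
    (hy : ({x, y} : Finset (Fin k)) ∈ P) : y = p x :=
  partner_unique hP (hpmem x) hy (hpne x)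

lemma p_inj (hP : IsPairing P) {x y : Fin k} (h : p x = p y) : x = y := by
  rw [← p_invol p hpne hpmem hP x, h, p_invol p hpne hpmem hP y]

lemma openerFun_iff (hP : IsPairing P) (i : Fin k) :
    openerFun P i = true ↔ i < p i := by
  simp only [openerFun, decide_eq_true_eq]
  constructor
  · rintro ⟨j, hij, hmem⟩
    have : j = p i := p_uniq p hpne hpmem hP (Fin.ne_of_gt hij) hmem
    rwa [← this]
  · intro h
    exact ⟨p i, h, hpmem i⟩

lemma openerFun_false_iff (hP : IsPairing P) (i : Fin k) :
    openerFun P i = false ↔ p i < i := by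
  constructor
  · intro hf
    rcases lt_trichotomy (p i) i with hc | hc | hc
    · exact hc
    · exact absurd hc (hpne i)
    · rw [← openerFun_iff p hpne hpmem hP] at hc
      rw [hf] at hc
      exact absurd hc (by simp)
  · intro hlt
    rcases Bool.eq_false_or_eq_true (openerFun P i) with hb | hb
    · rw [openerFun_iff p hpne hpmem hP] at hb
      exact absurd (lt_trans hlt hb) (lt_irrefl _)
    · exact hb

/-- interval lemma: blocks meeting the inside of a block stay inside -/
lemma block_between (hP : IsPairing P)
    (hNC : ¬ ∃ a b c d : Fin k, a < b ∧ b < c ∧ c < d ∧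
      ({a, c} : Finset (Fin k)) ∈ P ∧ ({b, d} : Finset (Fin k)) ∈ P)
    {i x : Fin k} (h1 : i < x) (h2 : x < p i) : i < p x ∧ p x < p i := by
  have hxi : x ≠ i := Fin.ne_of_gt h1
  have hpxi : p x ≠ i := by
    intro h
    have : x = p i := by
      rw [← h]
      exact (p_invol p hpne hpmem hP x).symm
    rw [this] at h2
    exact absurd h2 (lt_irrefl _)
  have hpxpi : p x ≠ p i := fun h => hxi (p_inj p hpne hpmem hP h)
  rcases lt_trichotomy (p x) i with hc | hc | hc
  · exfalso
    apply hNC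
    refine ⟨p x, i, x, p i, hc, h1, h2, ?_, hpmem i⟩
    rw [Finset.pair_comm]
    exact hpmem x
  · exact absurd hc hpxi
  · -- i < p x ; need p x < p i
    rcases lt_trichotomy (p x) (p i) with hd | hd | hd
    · exact ⟨hc, hd⟩
    · exact absurd hd hpxpi
    · exfalso
      apply hNC
      refine ⟨i, x, p i, p x, h1, h2, hd, hpmem i, hpmem x⟩

lemma openerFun_nonneg (hP : IsPairing P) (t : ℕ) : 0 ≤ ht (openerFun P) t := by
  set f := openerFun P with hf
  have hd := ht_diff f (Nat.zero_le t)
  have h0 : ht f 0 = 0 := rfl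
  rw [h0] at hd
  have hcard : (dnS f 0 t).card ≤ (upS f 0 t).card := by
    apply Finset.card_le_card_of_injOn p
    · intro c hc
      rw [Finset.mem_coe, mem_dnS] at hc
      rw [Finset.mem_coe, mem_upS]
      obtain ⟨_, hct, hcf⟩ := hc
      have hpc : p c < c := (openerFun_false_iff p hpne hpmem hP c).mp hcf
      refine ⟨Nat.zero_le _, lt_trans (by exact_mod_cast hpc) hct, ?_⟩
      rw [openerFun_iff p hpne hpmem hP]
      rw [p_invol p hpne hpmem hP c]
      exact hpc
    · intro a _ b _ h
      exact p_inj p hpne hpmem hP h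
  omega

lemma openerFun_end (hP : IsPairing P) : ht (openerFun P) k = 0 := by
  set f := openerFun P with hf
  have hd := ht_diff f (Nat.zero_le k)
  have h0 : ht f 0 = 0 := rfl
  rw [h0] at hd
  have hcard : (upS f 0 k).card ≤ (dnS f 0 k).card := by
    apply Finset.card_le_card_of_injOn p
    · intro c hc
      rw [Finset.mem_coe, mem_upS] at hc
      rw [Finset.mem_coe, mem_dnS]
      obtain ⟨_, _, hcf⟩ := hc
      have hpc : c < p c := (openerFun_iff p hpne hpmem hP c).mp hcf
      refine ⟨Nat.zero_le _, (p c).isLt, ?_⟩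
      rw [openerFun_false_iff p hpne hpmem hP]
      rw [p_invol p hpne hpmem hP c]
      exact hpc
    · intro a _ b _ h
      exact p_inj p hpne hpmem hP h
  have hge := openerFun_nonneg p hpne hpmem hP k
  rw [← hf] at hge
  omega

end withp

end pairing

section pairing2

variable {k : ℕ} {P : Finset (Finset (Fin k))}
  (p : Fin k → Fin k)
  (hpne : ∀ x, p x ≠ x)
  (hpmem : ∀ x, ({x, p x} : Finset (Fin k)) ∈ P)

include hpne hpmem

lemma partner_eq_Mm (hP : IsPairing P)
    (hNC : ¬ ∃ a b c d : Fin k, a < b ∧ b < c ∧ c < d ∧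
      ({a, c} : Finset (Fin k)) ∈ P ∧ ({b, d} : Finset (Fin k)) ∈ P)
    {i : Fin k} (hi : i < p i) : p i = Mm (openerFun P) i := by
  set f := openerFun P with hf
  have hnn : ∀ t, 0 ≤ ht f t := fun t => openerFun_nonneg p hpne hpmem hP t
  have hend : ht f k = 0 := openerFun_end p hpne hpmem hP
  have hfi : f i = true := (openerFun_iff p hpne hpmem hP i).mpr hi
  have hfpi : f (p i) = false := by
    rw [hf, openerFun_false_iff p hpne hpmem hP, p_invol p hpne hpmem hP]
    exact hi
  have hival : i.val < (p i).val := hi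
  -- Step 1 : p i is a candidate
  have hstep1 : p i ∈ cands f i := by
    rw [mem_cands]
    refine ⟨hi, ?_⟩
    have hd := ht_diff f (show i.val+1 ≤ (p i).val+1 by omega)
    have hpiin : p i ∈ dnS f (i.val+1) ((p i).val+1) :=
      mem_dnS.mpr ⟨by omega, by omega, hfpi⟩
    have hinj : (upS f (i.val+1) ((p i).val+1)).card
        ≤ ((dnS f (i.val+1) ((p i).val+1)).erase (p i)).card := by
      apply Finset.card_le_card_of_injOn p
      · intro o ho
        rw [Finset.mem_coe, mem_upS] at ho
        obtain ⟨h1o, h2o, h3o⟩ := ho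
        have hio : i < o := by rw [Fin.lt_def]; omega
        have hopi : o ≠ p i := by
          intro h
          rw [h, hfpi] at h3o
          exact absurd h3o (by simp)
        have hovalne : o.val ≠ (p i).val := fun hh => hopi (Fin.ext hh)
        have hopilt : o < p i := by rw [Fin.lt_def]; omega
        obtain ⟨hb1, hb2⟩ := block_between p hpne hpmem hP hNC hio hopilt
        rw [Finset.mem_coe, Finset.mem_erase]
        refine ⟨fun h => absurd (p_inj p hpne hpmem hP h) (Fin.ne_of_gt hio), ?_⟩
        rw [mem_dnS]
        refine ⟨by exact_mod_cast hb1, by have : (p o).val < (p i).val := hb2; omega, ?_⟩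
        rw [hf, openerFun_false_iff p hpne hpmem hP, p_invol p hpne hpmem hP]
        exact (openerFun_iff p hpne hpmem hP o).mp h3o
      · intro a _ b _ h
        exact p_inj p hpne hpmem hP h
    have herase := Finset.card_erase_of_mem hpiin
    have hpos : 0 < (dnS f (i.val+1) ((p i).val+1)).card :=
      Finset.card_pos.mpr ⟨p i, hpiin⟩
    omega
  -- Step 2 : p i is minimal among the candidates
  have hstep2 : ∀ j ∈ cands f i, p i ≤ j := by
    intro j hj
    rw [mem_cands] at hj
    obtain ⟨hij, hjlt⟩ := hj
    by_contra hcon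
    push_neg at hcon
    have hd := ht_diff f (show i.val+1 ≤ j.val+1 by
      have : i.val < j.val := hij; omega)
    have hinj : (dnS f (i.val+1) (j.val+1)).card ≤ (upS f (i.val+1) (j.val+1)).card := by
      apply Finset.card_le_card_of_injOn p
      · intro c hc
        rw [Finset.mem_coe, mem_dnS] at hc
        obtain ⟨h1c, h2c, h3c⟩ := hc
        have hic : i < c := by rw [Fin.lt_def]; omega
        have hpc : p c < c := (openerFun_false_iff p hpne hpmem hP c).mp h3c
        have hcpi : c < p i := by
          rw [Fin.lt_def]
          have h1 : j.val < (p i).val := hcon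
          omega
        obtain ⟨hb1, _⟩ := block_between p hpne hpmem hP hNC hic hcpi
        rw [Finset.mem_coe, mem_upS]
        refine ⟨by exact_mod_cast hb1, by have : (p c).val < c.val := hpc; omega, ?_⟩
        rw [hf, openerFun_iff p hpne hpmem hP, p_invol p hpne hpmem hP]
        exact hpc
      · intro a _ b _ h
        exact p_inj p hpne hpmem hP h
    omega
  obtain ⟨h1, h2, h3⟩ := Mm_spec hnn hend hfi
  exact le_antisymm (hstep2 _ (mem_cands.mpr ⟨h1, h2⟩)) (h3 _ hstep1)

end pairing2

lemma nc_card (k : ℕ) :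
    Set.ncard {P : Finset (Finset (Fin k)) | IsNonCrossingPairing P} = W k 0 := by
  have hset : {P : Finset (Finset (Fin k)) | IsNonCrossingPairing P}
      = ↑(univ.filter (fun P : Finset (Finset (Fin k)) => IsNonCrossingPairing P)) := by
    ext P; simp
  rw [hset, Set.ncard_coe_finset, ← Dset_card k 0]
  apply Finset.card_bij (fun P _ => openerFun P)
  · -- maps into Dset k 0
    intro P hP
    rw [Finset.mem_filter] at hP
    obtain ⟨_, hPP, hNC⟩ := hP
    choose p hpne hpmem using partner_exists hPP
    rw [mem_Dset]
    refine ⟨fun t => openerFun_nonneg p hpne hpmem hPP t, ?_⟩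
    have := openerFun_end p hpne hpmem hPP
    exact_mod_cast this
  · -- injective
    intro P hP Q hQ h
    rw [Finset.mem_filter] at hP hQ
    obtain ⟨_, hPP, hPNC⟩ := hP
    obtain ⟨_, hQP, hQNC⟩ := hQ
    choose p hpne hpmem using partner_exists hPP
    choose q hqne hqmem using partner_exists hQP
    have hf : openerFun P = openerFun Q := h
    have hnn : ∀ t, 0 ≤ ht (openerFun P) t := fun t => openerFun_nonneg p hpne hpmem hPP t
    have hend : ht (openerFun P) k = 0 := openerFun_end p hpne hpmem hPP
    have hpq : ∀ x, p x = q x := by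
      intro x
      rcases Bool.eq_false_or_eq_true (openerFun P x) with hx | hx
      · -- opener
        have hx' : x < p x := (openerFun_iff p hpne hpmem hPP x).mp hx
        have hxq : x < q x := (openerFun_iff q hqne hqmem hQP x).mp (by rw [← hf]; exact hx)
        rw [partner_eq_Mm p hpne hpmem hPP hPNC hx',
          partner_eq_Mm q hqne hqmem hQP hQNC hxq, hf]
      · -- closer
        have hpx : p x < x := (openerFun_false_iff p hpne hpmem hPP x).mp hx
        have hqx : q x < x := (openerFun_false_iff q hqne hqmem hQP x).mp (by rw [← hf]; exact hx)
        have h1 : p x < p (p x) := by rw [p_invol p hpne hpmem hPP]; exact hpx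
        have h2 : q x < q (q x) := by rw [p_invol q hqne hqmem hQP]; exact hqx
        have e1 : x = Mm (openerFun P) (p x) := by
          have := partner_eq_Mm p hpne hpmem hPP hPNC h1
          rwa [p_invol p hpne hpmem hPP] at this
        have e2 : x = Mm (openerFun P) (q x) := by
          have := partner_eq_Mm q hqne hqmem hQP hQNC h2
          rw [p_invol q hqne hqmem hQP] at this
          rw [hf]
          exact this
        apply Mm_inj hnn hend ?_ ?_ (e1.symm.trans e2)
        · exact (openerFun_iff p hpne hpmem hPP (p x)).mpr h1
        · rw [hf]; exact (openerFun_iff q hqne hqmem hQP (q x)).mpr h2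
    apply Finset.Subset.antisymm
    · intro B hB
      obtain ⟨a, b, hab, rfl⟩ := Finset.card_eq_two.mp (hPP.1 B hB)
      have hba : b = p a := p_uniq p hpne hpmem hPP (fun hh => hab hh.symm) hB
      rw [hba, hpq]
      exact hqmem a
    · intro B hB
      obtain ⟨a, b, hab, rfl⟩ := Finset.card_eq_two.mp (hQP.1 B hB)
      have hba : b = q a := p_uniq q hqne hqmem hQP (fun hh => hab hh.symm) hB
      rw [hba, ← hpq]
      exact hpmem a
  · -- surjective
    intro f hf
    rw [mem_Dset] at hf
    obtain ⟨hnn, hend⟩ := hf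
    have hend' : ht f k = 0 := by exact_mod_cast hend
    refine ⟨pairingOf f, ?_, openerFun_pairingOf hnn hend'⟩
    rw [Finset.mem_filter]
    exact ⟨Finset.mem_univ _, pairingOf_isPairing hnn hend', pairingOf_nc hnn hend'⟩

section op
variable (S : FockC →L[ℂ] FockC)
    (hS : ∀ (ξ : FockC) (n : ℕ), (S ξ) (n + 1) = ξ n)
    (hS0 : ∀ ξ : FockC, (S ξ) 0 = 0)
    (Ω : FockC) (hΩ : ∀ n, Ω n = if n = 0 then 1 else 0)

omit Ω hΩ in
include hS hS0 in
lemma S_single (n : ℕ) : S (lp.single 2 n (1:ℂ)) = lp.single 2 (n+1) (1:ℂ) := by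
  ext m
  match m with
  | 0 => rw [hS0]; rw [lp.single_apply_ne 2 (n+1) _ (by omega : (0:ℕ) ≠ n+1)]
  | (m+1) =>
    rw [hS]
    rcases eq_or_ne m n with rfl | h
    · rw [lp.single_apply_self, lp.single_apply_self]
    · rw [lp.single_apply_ne 2 n _ h, lp.single_apply_ne 2 (n+1) _ (by omega : m+1 ≠ n+1)]

omit Ω hΩ in
include hS hS0 in
lemma adj_apply (ξ : FockC) (n : ℕ) : (ContinuousLinearMap.adjoint S ξ) n = ξ (n+1) := by
  have h1 : (ContinuousLinearMap.adjoint S ξ) n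
      = inner ℂ (lp.single 2 n (1:ℂ)) (ContinuousLinearMap.adjoint S ξ) := by
    rw [lp.inner_single_left]; simp [RCLike.inner_apply]
  rw [h1, ContinuousLinearMap.adjoint_inner_right, S_single S hS hS0,
    lp.inner_single_left]
  simp [RCLike.inner_apply]

include hS hS0 hΩ in
lemma coord_W (k : ℕ) : ∀ n, (((S + ContinuousLinearMap.adjoint S) ^ k) Ω) n = (W k n : ℂ) := by
  induction k with
  | zero =>
    intro n
    rw [pow_zero]
    simp only [ContinuousLinearMap.one_apply, hΩ, W]
    split <;> simp
  | succ k ih =>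
    intro n
    rw [pow_succ', ContinuousLinearMap.mul_apply, ContinuousLinearMap.add_apply]
    set v := ((S + ContinuousLinearMap.adjoint S) ^ k) Ω
    have : (S v + (ContinuousLinearMap.adjoint S) v) n = (S v) n + ((ContinuousLinearMap.adjoint S) v) n := rfl
    rw [this, adj_apply S hS hS0]
    match n with
    | 0 => rw [hS0, W_succ_zero, ih 1]; push_cast; ring
    | (m+1) => rw [hS, W_succ_succ, ih m, ih (m+2)]; push_cast; ring

include hS hS0 hΩ in
lemma inner_eq_W (k : ℕ) :
    (inner ℂ Ω (((S + ContinuousLinearMap.adjoint S) ^ k) Ω) : ℂ) = (W k 0 : ℂ) := by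
  have hΩs : Ω = lp.single 2 0 (1:ℂ) := by
    ext m
    rw [hΩ]
    rcases eq_or_ne m 0 with rfl | h
    · rw [lp.single_apply_self]; simp
    · rw [lp.single_apply_ne 2 0 _ h]; simp [h]
  have step1 : (inner ℂ Ω (((S + ContinuousLinearMap.adjoint S) ^ k) Ω) : ℂ)
      = (((S + ContinuousLinearMap.adjoint S) ^ k) Ω) 0 := by
    rw [hΩs, lp.inner_single_left]
    simp [RCLike.inner_apply]
  rw [step1, coord_W S hS hS0 Ω hΩ k 0]

end op


/-- Let `ℓ` be the creation operator on `F(ℂ)` (the shift `e^{⊗n} ↦ e^{⊗(n+1)}`),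
`Ω` the vacuum, and `φ(a) = ⟨Ω, aΩ⟩`. Then `φ((ℓ + ℓ*)^k)` equals the number of
non-crossing pairings of `{1, …, k}`; in particular it vanishes for odd `k` and
equals the Catalan number `C_{k/2} = (1/(k/2+1))·binomial(k, k/2)` for even `k`. -/
theorem vacuum_moments_creation_plus_annihilation
    (S : FockC →L[ℂ] FockC)
    (hS : ∀ (ξ : FockC) (n : ℕ), (S ξ) (n + 1) = ξ n)
    (hS0 : ∀ ξ : FockC, (S ξ) 0 = 0)
    (Ω : FockC) (hΩ : ∀ n, Ω n = if n = 0 then 1 else 0) (k : ℕ) :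
    (inner ℂ Ω (((S + ContinuousLinearMap.adjoint S) ^ k) Ω) : ℂ)
        = (Set.ncard {P : Finset (Finset (Fin k)) | IsNonCrossingPairing P} : ℂ) ∧
    (Odd k → (inner ℂ Ω (((S + ContinuousLinearMap.adjoint S) ^ k) Ω) : ℂ) = 0) ∧
    (∀ m : ℕ, k = 2 * m →
      (inner ℂ Ω (((S + ContinuousLinearMap.adjoint S) ^ k) Ω) : ℂ)
        = (Nat.choose (2 * m) m : ℂ) / (m + 1)) := by
  have key := inner_eq_W S hS hS0 Ω hΩ k
  refine ⟨?_, ?_, ?_⟩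
  · rw [key, nc_card k]
  · intro hodd
    rw [key, W_parity k 0 (by have := Nat.odd_iff.mp hodd; omega)]
    simp
  · intro m hm
    subst hm
    rw [key]
    have h1 := W_even m
    calc (W (2*m) 0 : ℂ)
        = (Nat.choose (2*m) m : ℂ) - (Nat.choose (2*m) (m+1) : ℂ) := by
          exact_mod_cast congrArg (Int.cast : ℤ → ℂ) h1
      _ = (Nat.choose (2*m) m : ℂ) / (m+1) := catalan_frac m
end

section
/- Let ℓ be the creation operator on F(ℂ), f a polynomial with real coefficients, x = ℓ* + f(ℓ), and φ(a) = ⟨Ω, aΩ⟩. Then for all sufficiently small z ≠ 0 (so that (1/z + f(z))·1 − x* is invertible), φ(((1/z + f(z))·1 − x*)^{−1}) = z. Consequently the Cauchy transform G of the law of x satisfies G(1/z + f(z)) = z, i.e., K(z) = 1/z + f(z) is the compositional inverse of G. -/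
open ContinuousLinearMap Polynomial

namespace HaagerupAux

lemma geomMem {z : ℂ} (hz : ‖z‖ < 1) : Memℓp (fun n : ℕ => z ^ n) 2 := by
  apply memℓp_gen
  have h : Summable (fun n : ℕ => (‖z‖ ^ 2) ^ n) :=
    summable_geometric_of_lt_one (by positivity)
      (by nlinarith [norm_nonneg z])
  refine h.congr fun n => ?_
  have : (2 : ENNReal).toReal = ((2 : ℕ) : ℝ) := by norm_num
  rw [this, Real.rpow_natCast, norm_pow, ← pow_mul, ← pow_mul, Nat.mul_comm]

/-- The geometric vector `(1, z, z², …)` (junk value `0` if `‖z‖ ≥ 1`). -/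
noncomputable def xi (z : ℂ) : FockC :=
  if h : ‖z‖ < 1 then (⟨fun n => z ^ n, geomMem h⟩ : lp (fun _ : ℕ => ℂ) 2) else 0

lemma xi_apply {z : ℂ} (hz : ‖z‖ < 1) (n : ℕ) : (xi z) n = z ^ n := by
  rw [xi, dif_pos hz]

lemma inner_eq (f g : FockC) :
    (inner ℂ f g : ℂ) = ∑' n, (starRingEnd ℂ) (f n) * g n := by
  rw [lp.inner_eq_tsum]
  simp only [RCLike.inner_apply']

lemma inner_omega_left {Ω : FockC} (hΩ : ∀ n, Ω n = if n = 0 then 1 else 0)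
    (v : FockC) : (inner ℂ Ω v : ℂ) = v 0 := by
  rw [inner_eq]
  rw [tsum_eq_single 0]
  · simp [hΩ 0]
  · intro n hn
    simp [hΩ n, hn]


lemma S_xi (S : FockC →L[ℂ] FockC)
    (hS : ∀ (ξ : FockC) (n : ℕ), (S ξ) (n + 1) = ξ n)
    (hS0 : ∀ ξ : FockC, (S ξ) 0 = 0)
    {Ω : FockC} (hΩ : ∀ n, Ω n = if n = 0 then 1 else 0)
    {z : ℂ} (hz : z ≠ 0) (h1 : ‖z‖ < 1) :
    S (xi z) = z⁻¹ • (xi z - Ω) := by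
  apply lp.ext
  funext n
  have hc : (⇑(z⁻¹ • (xi z - Ω)) : ∀ _ : ℕ, ℂ) = z⁻¹ • (⇑(xi z) - ⇑Ω) := by
    rw [lp.coeFn_smul, lp.coeFn_sub]
  cases n with
  | zero =>
    rw [hS0, hc]
    simp [xi_apply h1, hΩ 0]
  | succ n =>
    rw [hS, hc]
    simp only [Pi.smul_apply, Pi.sub_apply, xi_apply h1, hΩ (n+1), smul_eq_mul,
      Nat.add_one_ne_zero, if_false, sub_zero]
    field_simp
    ring

lemma adjoint_S_xi (S : FockC →L[ℂ] FockC)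
    (hS : ∀ (ξ : FockC) (n : ℕ), (S ξ) (n + 1) = ξ n)
    (hS0 : ∀ ξ : FockC, (S ξ) 0 = 0)
    {z : ℂ} (h1 : ‖z‖ < 1) :
    ContinuousLinearMap.adjoint S (xi z) = z • xi z := by
  apply ext_inner_right ℂ
  intro v
  rw [ContinuousLinearMap.adjoint_inner_left, inner_smul_left]
  rw [inner_eq, inner_eq]
  have hsum : Summable fun n : ℕ => (starRingEnd ℂ) ((xi z) n) * (S v) n := by
    have := lp.summable_inner (𝕜 := ℂ) (xi z) (S v)
    simpa only [RCLike.inner_apply'] using this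
  rw [Summable.tsum_eq_zero_add hsum]
  have h0 : (starRingEnd ℂ) ((xi z) 0) * (S v) 0 = 0 := by
    rw [hS0]; ring
  rw [h0, zero_add]
  rw [← tsum_mul_left]
  congr 1
  funext n
  rw [hS, xi_apply h1, xi_apply h1, pow_succ, map_mul]
  ring

lemma pow_eig (A : FockC →L[ℂ] FockC) {v : FockC} {c : ℂ} (h : A v = c • v) :
    ∀ n : ℕ, (A ^ n) v = c ^ n • v := by
  intro n
  induction n with
  | zero => simp
  | succ n ih =>
    rw [pow_succ, ContinuousLinearMap.mul_apply, h, map_smul, ih, smul_smul,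
      pow_succ, mul_comm]

lemma aeval_eig (A : FockC →L[ℂ] FockC) {v : FockC} {c : ℂ} (h : A v = c • v)
    (p : Polynomial ℂ) : (Polynomial.aeval A p) v = p.eval c • v := by
  induction p using Polynomial.induction_on' with
  | add p q hp hq => simp [hp, hq, add_smul]
  | monomial n a =>
    rw [Polynomial.aeval_monomial, Polynomial.eval_monomial,
      ContinuousLinearMap.mul_apply, pow_eig A h n, map_smul]
    rw [Algebra.algebraMap_eq_smul_one]
    simp [smul_smul, mul_comm]


lemma adjoint_aeval (A : FockC →L[ℂ] FockC) (f : Polynomial ℝ) :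
    ContinuousLinearMap.adjoint (Polynomial.aeval A (f.map (algebraMap ℝ ℂ)))
      = Polynomial.aeval (ContinuousLinearMap.adjoint A) (f.map (algebraMap ℝ ℂ)) := by
  rw [← ContinuousLinearMap.star_eq_adjoint, ← ContinuousLinearMap.star_eq_adjoint]
  induction f using Polynomial.induction_on' with
  | add p q hp hq => rw [Polynomial.map_add, map_add, star_add, hp, hq, ← map_add]
  | monomial n a =>
    rw [Polynomial.map_monomial, Polynomial.aeval_monomial, Polynomial.aeval_monomial]
    rw [Algebra.algebraMap_eq_smul_one, Algebra.algebraMap_eq_smul_one]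
    rw [smul_one_mul, smul_one_mul, star_smul, star_pow]
    congr 1
    simp

lemma conj_eval (f : Polynomial ℝ) (w : ℂ) :
    (starRingEnd ℂ) ((f.map (algebraMap ℝ ℂ)).eval w)
      = (f.map (algebraMap ℝ ℂ)).eval ((starRingEnd ℂ) w) := by
  induction f using Polynomial.induction_on' with
  | add p q hp hq => rw [Polynomial.map_add, Polynomial.eval_add, map_add, hp, hq,
      Polynomial.eval_add]
  | monomial n a =>
    rw [Polynomial.map_monomial, Polynomial.eval_monomial, Polynomial.eval_monomial,
      map_mul, map_pow]
    simp

lemma eval_bound (q : Polynomial ℂ) :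
    ∃ C : ℝ, 0 ≤ C ∧ ∀ w : ℂ, ‖w‖ ≤ 1 → ‖q.eval w‖ ≤ C := by
  refine ⟨∑ i ∈ Finset.range (q.natDegree + 1), ‖q.coeff i‖,
    Finset.sum_nonneg fun i _ => norm_nonneg _, fun w hw => ?_⟩
  rw [Polynomial.eval_eq_sum_range]
  refine le_trans (norm_sum_le _ _) (Finset.sum_le_sum fun i _ => ?_)
  rw [norm_mul, norm_pow]
  calc ‖q.coeff i‖ * ‖w‖ ^ i ≤ ‖q.coeff i‖ * 1 ^ i := by
        exact mul_le_mul_of_nonneg_left (pow_le_pow_left₀ (norm_nonneg w) hw i)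
          (norm_nonneg _)
    _ = ‖q.coeff i‖ := by ring

lemma isUnit_smul_one_sub (B : FockC →L[ℂ] FockC) (lam : ℂ) (hlam : ‖B‖ < ‖lam‖) :
    IsUnit (lam • (1 : FockC →L[ℂ] FockC) - B) := by
  have hl : lam ≠ 0 := by
    intro h
    rw [h, norm_zero] at hlam
    exact absurd hlam (not_lt.2 (norm_nonneg B))
  have hlpos : 0 < ‖lam‖ := lt_of_le_of_lt (norm_nonneg B) hlam
  have h1 : ‖lam⁻¹ • B‖ < 1 := by
    have he : ‖lam⁻¹ • B‖ = ‖lam‖⁻¹ * ‖B‖ := by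
      have := norm_smul (lam⁻¹) B
      rw [norm_inv] at this
      exact this
    rw [he]
    calc ‖lam‖⁻¹ * ‖B‖ < ‖lam‖⁻¹ * ‖lam‖ := by
          exact mul_lt_mul_of_pos_left hlam (inv_pos.2 hlpos)
      _ = 1 := inv_mul_cancel₀ (ne_of_gt hlpos)
  have hu : IsUnit (1 - lam⁻¹ • B) := isUnit_one_sub_of_norm_lt_one h1
  have hkey : lam • (1 : FockC →L[ℂ] FockC) - B
      = (algebraMap ℂ (FockC →L[ℂ] FockC) lam) * (1 - lam⁻¹ • B) := by
    rw [mul_sub, mul_one, Algebra.algebraMap_eq_smul_one, smul_one_mul, smul_smul,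
      mul_inv_cancel₀ hl, one_smul]
  rw [hkey]
  exact (IsUnit.map (algebraMap ℂ (FockC →L[ℂ] FockC)) (isUnit_iff_ne_zero.2 hl)).mul hu

lemma inverse_apply_eq {T : FockC →L[ℂ] FockC} (hT : IsUnit T) {v w : FockC}
    (h : T v = w) : Ring.inverse T w = v := by
  have h1 : Ring.inverse T * T = 1 := Ring.inverse_mul_cancel T hT
  calc Ring.inverse T w = (Ring.inverse T * T) v := by
        rw [ContinuousLinearMap.mul_apply, h]
    _ = v := by rw [h1, ContinuousLinearMap.one_apply]


lemma key (S : FockC →L[ℂ] FockC)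
    (hS : ∀ (ξ : FockC) (n : ℕ), (S ξ) (n + 1) = ξ n)
    (hS0 : ∀ ξ : FockC, (S ξ) 0 = 0)
    {Ω : FockC} (hΩ : ∀ n, Ω n = if n = 0 then 1 else 0)
    (f : Polynomial ℝ) {w : ℂ} (hw : w ≠ 0) (h1 : ‖w‖ < 1)
    (hnorm : ‖ContinuousLinearMap.adjoint
        (ContinuousLinearMap.adjoint S + Polynomial.aeval S (f.map (algebraMap ℝ ℂ)))‖
      < ‖1 / w + (f.map (algebraMap ℝ ℂ)).eval w‖) :
    IsUnit ((1 / w + (f.map (algebraMap ℝ ℂ)).eval w) • (1 : FockC →L[ℂ] FockC)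
        - ContinuousLinearMap.adjoint
            (ContinuousLinearMap.adjoint S + Polynomial.aeval S (f.map (algebraMap ℝ ℂ))))
      ∧ Ring.inverse ((1 / w + (f.map (algebraMap ℝ ℂ)).eval w) • (1 : FockC →L[ℂ] FockC)
        - ContinuousLinearMap.adjoint
            (ContinuousLinearMap.adjoint S + Polynomial.aeval S (f.map (algebraMap ℝ ℂ)))) Ω
        = w • xi w := by
  set fC : Polynomial ℂ := f.map (algebraMap ℝ ℂ) with hfC
  set x : FockC →L[ℂ] FockC := ContinuousLinearMap.adjoint S + Polynomial.aeval S fC with hx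
  set lam : ℂ := 1 / w + fC.eval w with hlam
  set T : FockC →L[ℂ] FockC := lam • 1 - ContinuousLinearMap.adjoint x with hT
  have hux : IsUnit T := isUnit_smul_one_sub _ _ hnorm
  have hax : ContinuousLinearMap.adjoint x
      = S + Polynomial.aeval (ContinuousLinearMap.adjoint S) fC := by
    rw [hx, map_add, ContinuousLinearMap.adjoint_adjoint, adjoint_aeval]
  have hSxi := S_xi S hS hS0 hΩ hw h1
  have hSadj := adjoint_S_xi S hS hS0 h1
  have hfxi : (Polynomial.aeval (ContinuousLinearMap.adjoint S) fC) (xi w)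
      = fC.eval w • xi w := aeval_eig _ hSadj fC
  have hTapp : T (w • xi w) = Ω := by
    have happ : T (w • xi w) = lam • (w • xi w)
        - (w • (w⁻¹ • (xi w - Ω)) + w • (fC.eval w • xi w)) := by
      rw [hT, ContinuousLinearMap.sub_apply, ContinuousLinearMap.smul_apply,
        ContinuousLinearMap.one_apply, hax, ContinuousLinearMap.add_apply,
        map_smul, map_smul, hSxi, hfxi]
    rw [happ]
    simp only [smul_smul, smul_sub]
    have e1 : w * w⁻¹ = 1 := mul_inv_cancel₀ hw
    have e2 : lam * w = 1 + w * fC.eval w := by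
      rw [hlam]
      field_simp
    rw [e1, e2, one_smul, add_smul, one_smul]
    module
  exact ⟨hux, inverse_apply_eq hux hTapp⟩

end HaagerupAux

/-- Haagerup's computation: let `ℓ` be the creation operator on `F(ℂ)`, `f` a real
polynomial, `x = ℓ* + f(ℓ)`, and `φ(a) = ⟨Ω, aΩ⟩` the vacuum state. Then for all
sufficiently small `z ≠ 0` the operators `(1/z + f(z))·1 − x*` and `(1/z + f(z))·1 − x`
are invertible, `φ(((1/z + f(z))·1 − x*)⁻¹) = z`, and consequently the Cauchy transform
`G(λ) = φ((λ·1 − x)⁻¹)` of the law of `x` satisfies `G(1/z + f(z)) = z`. -/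
theorem haagerup_R_transform_inverse
    (S : FockC →L[ℂ] FockC)
    (hS : ∀ (ξ : FockC) (n : ℕ), (S ξ) (n + 1) = ξ n)
    (hS0 : ∀ ξ : FockC, (S ξ) 0 = 0)
    (Ω : FockC) (hΩ : ∀ n, Ω n = if n = 0 then 1 else 0)
    (f : Polynomial ℝ) :
    ∃ δ > (0 : ℝ), ∀ z : ℂ, z ≠ 0 → ‖z‖ < δ →
      (letI fC : Polynomial ℂ := f.map (algebraMap ℝ ℂ)
       letI x : FockC →L[ℂ] FockC := ContinuousLinearMap.adjoint S + Polynomial.aeval S fC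
       letI T : FockC →L[ℂ] FockC :=
         (1 / z + fC.eval z) • (1 : FockC →L[ℂ] FockC) - ContinuousLinearMap.adjoint x
       letI T' : FockC →L[ℂ] FockC :=
         (1 / z + fC.eval z) • (1 : FockC →L[ℂ] FockC) - x
       (IsUnit T ∧ (inner ℂ Ω ((Ring.inverse T) Ω) : ℂ) = z) ∧
       (IsUnit T' ∧ (inner ℂ Ω ((Ring.inverse T') Ω) : ℂ) = z)) := by
  classical
  open HaagerupAux in
  set fC : Polynomial ℂ := f.map (algebraMap ℝ ℂ) with hfC
  set x : FockC →L[ℂ] FockC := ContinuousLinearMap.adjoint S + Polynomial.aeval S fC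
    with hxdef
  obtain ⟨C, hC0, hC⟩ := eval_bound fC
  set M : ℝ := ‖ContinuousLinearMap.adjoint x‖ with hM
  have hM0 : 0 ≤ M := norm_nonneg _
  have hCM1 : (0 : ℝ) < C + M + 1 := by linarith
  refine ⟨min 1 (C + M + 1)⁻¹, lt_min one_pos (inv_pos.2 hCM1), ?_⟩
  intro z hz hδ
  have hδ1 : ‖z‖ < 1 := lt_of_lt_of_le hδ (min_le_left _ _)
  have hδ2 : ‖z‖ < (C + M + 1)⁻¹ := lt_of_lt_of_le hδ (min_le_right _ _)
  have hbound : ∀ w : ℂ, w ≠ 0 → ‖w‖ = ‖z‖ → M < ‖1 / w + fC.eval w‖ := by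
    intro w hw hwz
    have hw1 : ‖w‖ < 1 := by rw [hwz]; exact hδ1
    have hfw : ‖fC.eval w‖ ≤ C := hC w (le_of_lt hw1)
    have hzpos : 0 < ‖z‖ := norm_pos_iff.2 hz
    have hwpos : 0 < ‖w‖ := by rw [hwz]; exact hzpos
    have hinv : C + M + 1 < ‖w‖⁻¹ := by
      have h4 : ‖z‖ * (C + M + 1) < 1 := by
        have h5 := mul_lt_mul_of_pos_right hδ2 hCM1
        rw [inv_mul_cancel₀ (ne_of_gt hCM1)] at h5
        exact h5
      have h6 := mul_lt_mul_of_pos_left h4 (inv_pos.2 hzpos)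
      rw [mul_one, ← mul_assoc, inv_mul_cancel₀ (ne_of_gt hzpos), one_mul] at h6
      rw [hwz]
      exact h6
    have hnw : ‖(1 : ℂ) / w‖ = ‖w‖⁻¹ := by rw [one_div, norm_inv]
    have htri : ‖w‖⁻¹ - ‖fC.eval w‖ ≤ ‖1 / w + fC.eval w‖ := by
      have h7 := norm_sub_norm_le ((1 : ℂ) / w) (-(fC.eval w))
      rw [norm_neg, sub_neg_eq_add, hnw] at h7
      exact h7
    linarith
  have hn1 : ‖ContinuousLinearMap.adjoint x‖ < ‖1 / z + fC.eval z‖ :=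
    hbound z hz rfl
  obtain ⟨hu, hinv⟩ := key S hS hS0 hΩ f hz hδ1 hn1
  set w : ℂ := (starRingEnd ℂ) z with hwdef
  have hw : w ≠ 0 := by
    intro h
    apply hz
    have h2 := congrArg (starRingEnd ℂ) h
    rw [hwdef] at h2
    simpa using h2
  have hwnorm : ‖w‖ = ‖z‖ := by
    simp [hwdef]
  have hw1 : ‖w‖ < 1 := by rw [hwnorm]; exact hδ1
  have hn2 : ‖ContinuousLinearMap.adjoint x‖ < ‖1 / w + fC.eval w‖ :=
    hbound w hw hwnorm
  obtain ⟨hu', hinv'⟩ := key S hS hS0 hΩ f hw hw1 hn2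
  have hconj : (starRingEnd ℂ) (1 / w + fC.eval w) = 1 / z + fC.eval z := by
    rw [map_add, map_div₀, map_one, conj_eval]
    rw [hwdef, Complex.conj_conj]
  have hTT : (1 / z + fC.eval z) • (1 : FockC →L[ℂ] FockC) - x
      = ContinuousLinearMap.adjoint ((1 / w + fC.eval w) • (1 : FockC →L[ℂ] FockC)
          - ContinuousLinearMap.adjoint x) := by
    rw [← ContinuousLinearMap.star_eq_adjoint, ← ContinuousLinearMap.star_eq_adjoint,
      star_sub, star_smul, star_one, star_star]
    rw [RCLike.star_def, hconj]
  refine ⟨⟨hu, ?_⟩, ⟨?_, ?_⟩⟩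
  · rw [hinv, inner_omega_left hΩ]
    have hs : (⇑(z • xi z) : ∀ _ : ℕ, ℂ) = z • ⇑(xi z) := lp.coeFn_smul z (xi z)
    rw [hs, Pi.smul_apply, xi_apply hδ1, pow_zero, smul_eq_mul, mul_one]
  · rw [hTT, ← ContinuousLinearMap.star_eq_adjoint]
    exact hu'.star
  · rw [hTT, ← ContinuousLinearMap.star_eq_adjoint, Ring.inverse_star,
      ContinuousLinearMap.star_eq_adjoint, ContinuousLinearMap.adjoint_inner_right,
      hinv', ← inner_conj_symm, inner_omega_left hΩ]
    have hs : (⇑(w • xi w) : ∀ _ : ℕ, ℂ) = w • ⇑(xi w) := lp.coeFn_smul w (xi w)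
    rw [hs, Pi.smul_apply, xi_apply hw1, pow_zero, smul_eq_mul, mul_one]
    rw [hwdef, Complex.conj_conj]
end
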